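/- arXiv:1309.7683 — 3 statements merged into one kernel-verified Lean document; each statement's English description precedes it below -/
import Mathlib

section
/- Every 2-connected graph with circumference t has pathwidth at most ⌊t/2⌋·(t−1). -/
open SimpleGraph

universe u v

section Defs

variable {V : Type u} {W : Type v}

/-- A path decomposition of `G`: a sequence of bags covering all edges and vertices,
with each vertex appearing in a consecutive interval of bags. -/
structure PathDecomp (G : SimpleGraph V) where
  n : ℕ
  bag : Fin (n + 1) → Finset V
  cov_edge : ∀ ⦃u w : V⦄, G.Adj u w → ∃ i, u ∈ bag i ∧ w ∈ bag i
  cov_vert : ∀ x : V, ∃ i, x ∈ bag i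
  interval : ∀ (x : V) (i j k : Fin (n + 1)), i ≤ j → j ≤ k →
    x ∈ bag i → x ∈ bag k → x ∈ bag j

/-- The pathwidth of `G` is at most `w`. -/
def pwLE (G : SimpleGraph V) (w : ℕ) : Prop :=
  ∃ D : PathDecomp G, ∀ i, (D.bag i).card ≤ w + 1

/-- The rooted pathwidth of `G` at `x` is at most `r`: there is a path decomposition
of width `≤ r` whose last bag contains `x`. -/
def rpwLE (G : SimpleGraph V) (x : V) (r : ℕ) : Prop :=
  ∃ D : PathDecomp G, x ∈ D.bag (Fin.last D.n) ∧ ∀ i, (D.bag i).card ≤ r + 1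

/-- The rooted pathwidth of `G` at `x`. -/
noncomputable def rpw (G : SimpleGraph V) (x : V) : ℕ := sInf {r | rpwLE G x r}

/-- `G` has a cycle of length `n`. -/
def HasCycleLen (G : SimpleGraph V) (n : ℕ) : Prop :=
  ∃ (x : V) (c : G.Walk x x), c.IsCycle ∧ c.length = n

/-- The circumference of `G` equals `t` (it is `0` if `G` is acyclic). -/
def CircumEq (G : SimpleGraph V) (t : ℕ) : Prop :=
  (∀ n, HasCycleLen G n → n ≤ t) ∧ (t = 0 ∨ HasCycleLen G t)

/-- `G` is `k`-connected: it has more than `k` vertices and stays connected after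
deleting any set of fewer than `k` vertices. -/
def KConn (G : SimpleGraph V) (k : ℕ) : Prop :=
  k < Nat.card V ∧
  ∀ S : Set V, S.Finite → S.ncard < k → (G.induce Sᶜ).Connected

/-- `G` has `k` pairwise vertex-disjoint cycles, each of length at least `t`. -/
def HasKDisjointCyclesLen (G : SimpleGraph V) (k t : ℕ) : Prop :=
  ∃ c : Fin k → Σ x : V, G.Walk x x,
    (∀ m, (c m).2.IsCycle ∧ t ≤ (c m).2.length) ∧
    ∀ m m', m ≠ m' → List.Disjoint (c m).2.support (c m').2.support

/-- `H` is a minor of `G`, witnessed by branch sets `br`. -/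
def IsMinorWithBranch (G : SimpleGraph V) (H : SimpleGraph W) (br : W → Set V) : Prop :=
  (∀ w, (G.induce (br w)).Connected) ∧
  (∀ w w', w ≠ w' → Disjoint (br w) (br w')) ∧
  (∀ ⦃w w'⦄, H.Adj w w' → ∃ u ∈ br w, ∃ u' ∈ br w', G.Adj u u')

/-- `H` is a minor of `G`. -/
def HasMinor (G : SimpleGraph V) (H : SimpleGraph W) : Prop :=
  ∃ br : W → Set V, IsMinorWithBranch G H br



/-- A rooted forest on `V`, given by a parent function together with a consistent
height function (the height of a vertex is its distance to the root of its component). -/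
structure RootedForest (V : Type u) where
  parent : V → Option V
  height : V → ℕ
  height_root : ∀ x, parent x = none → height x = 0
  height_child : ∀ ⦃x y⦄, parent x = some y → height x = height y + 1

/-- `x` is an ancestor of `y` (possibly `x = y`). -/
def RootedForest.Ancestor (F : RootedForest V) (x y : V) : Prop :=
  Relation.ReflTransGen (fun a b => F.parent a = some b) y x

/-- `x` is a proper ancestor of `y`. -/
def RootedForest.ProperAncestor (F : RootedForest V) (x y : V) : Prop :=
  Relation.TransGen (fun a b => F.parent a = some b) y x

/-- The treedepth of `G` is at most `d`: there is a rooted forest of height at most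
`d - 1` on `V(G)` whose closure contains `G`. -/
def treedepthLE (G : SimpleGraph V) (d : ℕ) : Prop :=
  ∃ F : RootedForest V, (∀ x, F.height x + 1 ≤ d) ∧
    ∀ ⦃x y⦄, G.Adj x y → F.ProperAncestor x y ∨ F.ProperAncestor y x

/-- Vertices of the complete binary tree of height `h`: binary strings of length at
most `h`; the parent of a nonempty string is its tail, the root is the empty string. -/
abbrev CBTVert (h : ℕ) := {l : List Bool // l.length ≤ h}

/-- The complete binary tree of height `h` as a simple graph. -/
def CBT (h : ℕ) : SimpleGraph (CBTVert h) where
  Adj u w := (∃ b, u.val = b :: w.val) ∨ (∃ b, w.val = b :: u.val)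
  symm := by constructor; intro u w hv; tauto
  loopless := by
    constructor
    rintro u (⟨b, hb⟩ | ⟨b, hb⟩) <;>
    · have := congrArg List.length hb
      simp at this

/-- The root of the complete binary tree. -/
def CBTroot (h : ℕ) : CBTVert h := ⟨[], by simp⟩

/-- The `m`-th leaf (in left-to-right order) of the complete binary tree of
height `h`: the binary string of length `h` whose bits are the binary digits of `m`,
most significant first. -/
def leafIdx (h : ℕ) (m : Fin (2 ^ h)) : CBTVert h :=
  ⟨(List.range h).map fun i => m.val.testBit (h - 1 - i), by simp⟩

/-- The graph obtained from `G` by adding `k` dominant vertices. -/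
def addDominant (G : SimpleGraph V) (k : ℕ) : SimpleGraph (V ⊕ Fin k) where
  Adj x y := (∃ a b, x = .inl a ∧ y = .inl b ∧ G.Adj a b) ∨
             (∃ a c, x = .inl a ∧ y = .inr c) ∨
             (∃ c a, x = .inr c ∧ y = .inl a) ∨
             (∃ c c', x = .inr c ∧ y = .inr c' ∧ c ≠ c')
  symm := by
    constructor
    rintro x y (⟨a,b,rfl,rfl,hab⟩|⟨a,c,rfl,rfl⟩|⟨c,a,rfl,rfl⟩|⟨c,c',rfl,rfl,hcc⟩)
    · exact Or.inl ⟨b,a,rfl,rfl,hab.symm⟩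
    · exact Or.inr (Or.inr (Or.inl ⟨c,a,rfl,rfl⟩))
    · exact Or.inr (Or.inl ⟨a,c,rfl,rfl⟩)
    · exact Or.inr (Or.inr (Or.inr ⟨c',c,rfl,rfl,hcc.symm⟩))
  loopless := by
    constructor
    rintro x (⟨a,b,rfl,h,hab⟩|⟨a,c,rfl,h⟩|⟨c,a,rfl,h⟩|⟨c,c',rfl,h,hcc⟩)
    · cases Sum.inl.inj h; exact G.irrefl hab
    · simp at h
    · simp at h
    · cases Sum.inr.inj h; exact hcc rfl

/-- The minimum size of a transversal of `G` (a set of vertices meeting all cycles). -/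
noncomputable def tau (G : SimpleGraph V) : ℕ :=
  sInf {n | ∃ S : Set V, S.ncard = n ∧ (G.induce Sᶜ).IsAcyclic}

/-- `x` is a cut-vertex of `G`. -/
def IsCutVertex (G : SimpleGraph V) (x : V) : Prop :=
  ∃ (u w : V) (hu : u ≠ x) (hw : w ≠ x),
    G.Reachable u w ∧ ¬ (G.induce {y | y ≠ x}).Reachable ⟨u, hu⟩ ⟨w, hw⟩

/-- A block of `G`: a maximal 2-connected subgraph, or a bridge edge,
or an isolated vertex. -/
def IsBlock (G : SimpleGraph V) (B : G.Subgraph) : Prop :=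
  (KConn B.coe 2 ∧ ∀ B' : G.Subgraph, B ≤ B' → KConn B'.coe 2 → B' = B) ∨
  (∃ (u w : V) (huw : G.Adj u w), G.IsBridge s(u, w) ∧ B = G.subgraphOfAdj huw) ∨
  (∃ x : V, (∀ u, ¬ G.Adj x u) ∧ B = G.singletonSubgraph x)

/-- The block-cut-forest of `G`: vertices are the cut-vertices and the blocks of `G`,
with a cut-vertex adjacent to exactly the blocks containing it. -/
def BCF (G : SimpleGraph V) :
    SimpleGraph ({x : V // IsCutVertex G x} ⊕ {B : G.Subgraph // IsBlock G B}) where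
  Adj x y := (∃ v B, x = .inl v ∧ y = .inr B ∧ v.val ∈ B.val.verts) ∨
             (∃ v B, x = .inr B ∧ y = .inl v ∧ v.val ∈ B.val.verts)
  symm := by
    constructor
    rintro x y (⟨v,B,rfl,rfl,hm⟩|⟨v,B,rfl,rfl,hm⟩)
    · exact Or.inr ⟨v,B,rfl,rfl,hm⟩
    · exact Or.inl ⟨v,B,rfl,rfl,hm⟩
  loopless := by
    constructor
    rintro x (⟨v,B,rfl,h,_⟩|⟨v,B,rfl,h,_⟩) <;> simp at h

/-- The octahedron `K_{2,2,2}` minus the edges of a triangle: parts are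
`{i} × {0,1}`; the deleted triangle consists of the vertices `(i, 0)`. -/
def Qgraph : SimpleGraph (Fin 3 × Fin 2) where
  Adj x y := x.1 ≠ y.1 ∧ ¬(x.2 = 0 ∧ y.2 = 0)
  symm := ⟨fun x y h => ⟨h.1.symm, fun hc => h.2 ⟨hc.2, hc.1⟩⟩⟩
  loopless := ⟨fun x h => h.1 rfl⟩

/-- The disjoint union of two triangles. -/
def TwoTriangles : SimpleGraph (Fin 3 ⊕ Fin 3) where
  Adj x y := (∃ a b, x = .inl a ∧ y = .inl b ∧ a ≠ b) ∨
             (∃ a b, x = .inr a ∧ y = .inr b ∧ a ≠ b)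
  symm := by
    constructor
    rintro x y (⟨a,b,rfl,rfl,hab⟩|⟨a,b,rfl,rfl,hab⟩)
    · exact Or.inl ⟨b,a,rfl,rfl,hab.symm⟩
    · exact Or.inr ⟨b,a,rfl,rfl,hab.symm⟩
  loopless := by
    constructor
    rintro x (⟨a,b,rfl,h,hab⟩|⟨a,b,rfl,h,hab⟩) <;>
    · first
      | (cases Sum.inl.inj h; exact hab rfl)
      | (cases Sum.inr.inj h; exact hab rfl)

/-- `A` contains a subdivision of `B` as a subgraph: branch vertices are given by an
injective map `f`, and each edge of `B` is replaced by a path in `A`; distinct edges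
give internally disjoint paths, and no branch vertex lies in the interior of a path. -/
def ContainsSubdivision (A : SimpleGraph V) (B : SimpleGraph W) : Prop :=
  ∃ (f : W → V) (P : ∀ ⦃u w : W⦄, B.Adj u w → A.Walk (f u) (f w)),
    Function.Injective f ∧
    (∀ ⦃u w : W⦄ (h : B.Adj u w), (P h).IsPath) ∧
    (∀ ⦃u w : W⦄ (h : B.Adj u w) (x : W), f x ∈ (P h).support → x = u ∨ x = w) ∧
    (∀ ⦃u w x y : W⦄ (h : B.Adj u w) (h' : B.Adj x y), s(u, w) ≠ s(x, y) →
      ∀ z, z ∈ (P h).support → z ∈ (P h').support →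
        z ∈ ({f u, f w} : Set V) ∩ {f x, f y})



end Defs

namespace PWaux

variable {V : Type} [Fintype V]

/-- Reachability within an allowed set, via walks in `G`. -/
def ReachIn (G : SimpleGraph V) (T : Set V) (a b : V) : Prop :=
  ∃ w : G.Walk a b, ∀ z ∈ w.support, z ∈ T

lemma reachIn_refl {G : SimpleGraph V} {T : Set V} {a : V} (ha : a ∈ T) :
    ReachIn G T a a := ⟨Walk.nil, by simp [ha]⟩

lemma reachIn_left {G : SimpleGraph V} {T : Set V} {a b : V} (h : ReachIn G T a b) : a ∈ T := by
  obtain ⟨w, hw⟩ := h; exact hw a w.start_mem_support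

lemma reachIn_symm {G : SimpleGraph V} {T : Set V} {a b : V} (h : ReachIn G T a b) :
    ReachIn G T b a := by
  obtain ⟨w, hw⟩ := h
  exact ⟨w.reverse, by intro z hz; exact hw z (by simpa using hz)⟩

lemma reachIn_trans {G : SimpleGraph V} {T : Set V} {a b c : V}
    (h : ReachIn G T a b) (h' : ReachIn G T b c) : ReachIn G T a c := by
  obtain ⟨w, hw⟩ := h; obtain ⟨w', hw'⟩ := h'
  refine ⟨w.append w', ?_⟩
  intro z hz
  rw [Walk.mem_support_append_iff] at hz
  rcases hz with hz | hz
  · exact hw z hz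
  · exact hw' z hz

lemma reachIn_adj {G : SimpleGraph V} {T : Set V} {a b : V}
    (hadj : G.Adj a b) (ha : a ∈ T) (hb : b ∈ T) : ReachIn G T a b :=
  ⟨hadj.toWalk, by intro z hz; simp at hz; rcases hz with rfl | rfl <;> assumption⟩

lemma reachIn_of_induce {G : SimpleGraph V} {T : Set V} {x y : T}
    (h : (G.induce T).Reachable x y) : ReachIn G T x y := by
  obtain ⟨w⟩ := h
  induction w with
  | nil => exact reachIn_refl (Subtype.coe_prop _)
  | cons hadj p ih =>
    exact reachIn_trans (reachIn_adj hadj (Subtype.coe_prop _) (Subtype.coe_prop _)) ih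

lemma reachIn_to_induce {G : SimpleGraph V} {T : Set V} {a b : V}
    (h : ReachIn G T a b) (ha : a ∈ T) (hb : b ∈ T) :
    (G.induce T).Reachable ⟨a, ha⟩ ⟨b, hb⟩ := by
  obtain ⟨w, hw⟩ := h
  induction w with
  | nil => rfl
  | @cons u c d hadj p ih =>
    have hc : c ∈ T := hw c (by simp)
    have h1 : (G.induce T).Adj ⟨u, ha⟩ ⟨c, hc⟩ := hadj
    exact (h1.reachable).trans (ih hc hb (fun z hz => hw z (by simp [hz])))

/-- First exit of a walk out of a vertex predicate. -/
lemma exists_exit {G : SimpleGraph V} {T : Set V} {D : V → Prop} :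
    ∀ {a b : V} (w : G.Walk a b), (∀ z ∈ w.support, z ∈ T) → D a → ¬ D b →
    ∃ x y, D x ∧ ¬ D y ∧ y ∈ T ∧ G.Adj x y := by
  intro a b w
  induction w with
  | nil => intro _ hda hdb; exact absurd hda hdb
  | @cons u c d hadj p ih =>
    intro hs hda hdb
    by_cases hdc : D c
    · exact ih (fun z hz => hs z (by simp [hz])) hdc hdb
    · exact ⟨u, c, hda, hdc, hs c (by simp), hadj⟩

/-- A normal ("depth-first") spanning tree structure on a finite vertex set `S`,
with a preorder numbering. -/
structure NTOn (G : SimpleGraph V) (S : Finset V) (r : V) where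
  par : V → V
  dep : V → ℕ
  num : V → ℕ
  hr : r ∈ S
  par_mem : ∀ x ∈ S, par x ∈ S
  par_self : par r = r
  par_adj : ∀ x ∈ S, x ≠ r → G.Adj x (par x)
  dep_r : dep r = 0
  dep_par : ∀ x ∈ S, x ≠ r → dep x = dep (par x) + 1
  normal : ∀ x ∈ S, ∀ y ∈ S, G.Adj x y →
    (∃ n, par^[n] y = x) ∨ (∃ n, par^[n] x = y)
  num_lt : ∀ x ∈ S, num x < S.card
  num_inj : ∀ x ∈ S, ∀ y ∈ S, num x = num y → x = y
  num_int : ∀ x ∈ S, ∀ a ∈ S, ∀ b ∈ S, ∀ c ∈ S,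
    (∃ n, par^[n] a = x) → (∃ n, par^[n] b = x) →
    num a ≤ num c → num c ≤ num b → ∃ n, par^[n] c = x

namespace NTOn

variable {G : SimpleGraph V} {S : Finset V} {r : V} (nt : NTOn G S r)

/-- `x` is an ancestor of `y`. -/
def Anc (x y : V) : Prop := ∃ n, nt.par^[n] y = x

lemma anc_refl (x : V) : nt.Anc x x := ⟨0, rfl⟩

lemma anc_trans {a b c : V} (h1 : nt.Anc a b) (h2 : nt.Anc b c) : nt.Anc a c := by
  obtain ⟨n, rfl⟩ := h1; obtain ⟨m, rfl⟩ := h2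
  exact ⟨n + m, (Function.iterate_add_apply _ n m c)⟩

lemma chain_mem {x : V} (hx : x ∈ S) (n : ℕ) : nt.par^[n] x ∈ S := by
  induction n with
  | zero => exact hx
  | succ n ih => rw [Function.iterate_succ_apply']; exact nt.par_mem _ ih

lemma anc_mem {x y : V} (hy : y ∈ S) (h : nt.Anc x y) : x ∈ S := by
  obtain ⟨n, rfl⟩ := h; exact nt.chain_mem hy n

lemma dep_pos {x : V} (hx : x ∈ S) (hxr : x ≠ r) : 0 < nt.dep x := by
  rw [nt.dep_par x hx hxr]; omega

lemma eq_root_of_dep {x : V} (hx : x ∈ S) (h : nt.dep x = 0) : x = r := by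
  by_contra hxr; have := nt.dep_pos hx hxr; omega

lemma iter_dep {x : V} (hx : x ∈ S) {n : ℕ} (h : n ≤ nt.dep x) :
    nt.dep (nt.par^[n] x) + n = nt.dep x := by
  induction n with
  | zero => simp
  | succ n ih =>
    have h1 : nt.dep (nt.par^[n] x) + n = nt.dep x := ih (by omega)
    have hmem := nt.chain_mem hx n
    have hne : nt.par^[n] x ≠ r := by
      intro he; rw [he, nt.dep_r] at h1; omega
    rw [Function.iterate_succ_apply']
    have h2 := nt.dep_par _ hmem hne
    omega

lemma iter_root {x : V} (hx : x ∈ S) : ∀ {n : ℕ}, nt.dep x ≤ n → nt.par^[n] x = r := by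
  have H : ∀ n, ∀ x, x ∈ S → nt.dep x ≤ n → nt.par^[n] x = r := by
    intro n
    induction n with
    | zero =>
      intro x hx h
      simpa using nt.eq_root_of_dep hx (Nat.le_zero.mp h)
    | succ n ih =>
      intro x hx h
      by_cases hxr : x = r
      · subst hxr; exact Function.iterate_fixed nt.par_self _
      · rw [Function.iterate_succ_apply]
        exact ih _ (nt.par_mem x hx) (by have := nt.dep_par x hx hxr; omega)
  exact fun {n} h => H n x hx h

lemma anc_norm {x y : V} (hy : y ∈ S) (h : nt.Anc x y) :
    ∃ n ≤ nt.dep y, nt.par^[n] y = x := by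
  obtain ⟨n, rfl⟩ := h
  by_cases hn : n ≤ nt.dep y
  · exact ⟨n, hn, rfl⟩
  · refine ⟨nt.dep y, le_refl _, ?_⟩
    rw [nt.iter_root hy (le_refl _), nt.iter_root hy (by omega)]

lemma anc_dep {x y : V} (hy : y ∈ S) (h : nt.Anc x y) : nt.dep x ≤ nt.dep y := by
  obtain ⟨n, hn, rfl⟩ := nt.anc_norm hy h
  have := nt.iter_dep hy hn; omega

lemma anc_antisymm {x y : V} (hy : y ∈ S) (h : nt.Anc x y) (hd : nt.dep x = nt.dep y) :
    x = y := by
  obtain ⟨n, hn, rfl⟩ := nt.anc_norm hy h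
  have := nt.iter_dep hy hn
  have : n = 0 := by omega
  subst this; rfl

lemma anc_total {y a b : V} (hy : y ∈ S) (h1 : nt.Anc a y) (h2 : nt.Anc b y) :
    nt.Anc a b ∨ nt.Anc b a := by
  obtain ⟨n, hn, rfl⟩ := nt.anc_norm hy h1
  obtain ⟨m, hm, rfl⟩ := nt.anc_norm hy h2
  rcases le_total n m with h | h
  · right
    refine ⟨m - n, ?_⟩
    rw [← Function.iterate_add_apply]
    congr 1; omega
  · left
    refine ⟨n - m, ?_⟩
    rw [← Function.iterate_add_apply]
    congr 1; omega

lemma anc_root {x : V} (hx : x ∈ S) : nt.Anc r x := ⟨nt.dep x, nt.iter_root hx le_rfl⟩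

lemma anc_dep_lt {x y : V} (hy : y ∈ S) (h : nt.Anc x y) (hne : x ≠ y) :
    nt.dep x < nt.dep y := by
  have h1 := nt.anc_dep hy h
  rcases eq_or_lt_of_le h1 with h2 | h2
  · exact absurd (nt.anc_antisymm hy h h2) hne
  · exact h2

/-- The climbing walk from `x` to its `n`-th ancestor. -/
lemma exists_climb {x : V} (hx : x ∈ S) : ∀ {n : ℕ}, n ≤ nt.dep x →
    ∃ w : G.Walk x (nt.par^[n] x), w.length = n ∧ w.IsPath ∧
      (∀ z, z ∈ w.support ↔ ∃ j ≤ n, nt.par^[j] x = z) ∧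
      (∀ e ∈ w.edges, ∃ j < n, e = s(nt.par^[j] x, nt.par^[j + 1] x)) := by
  have H : ∀ n, ∀ x, x ∈ S → n ≤ nt.dep x →
      ∃ w : G.Walk x (nt.par^[n] x), w.length = n ∧ w.IsPath ∧
      (∀ z, z ∈ w.support ↔ ∃ j ≤ n, nt.par^[j] x = z) ∧
      (∀ e ∈ w.edges, ∃ j < n, e = s(nt.par^[j] x, nt.par^[j + 1] x)) := by
    intro n
    induction n with
    | zero =>
      intro x hx _
      exact ⟨Walk.nil, rfl, Walk.IsPath.nil, by simp [eq_comm], by simp⟩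
    | succ n ih =>
      intro x hx hn
      have hxr : x ≠ r := by
        intro he; subst he; rw [nt.dep_r] at hn; omega
      have hadj : G.Adj x (nt.par x) := nt.par_adj x hx hxr
      have hpmem : nt.par x ∈ S := nt.par_mem x hx
      have hdep : nt.dep x = nt.dep (nt.par x) + 1 := nt.dep_par x hx hxr
      obtain ⟨w, hlen, hpath, hsupp, hedge⟩ := ih (nt.par x) hpmem (by omega)
      have hiter : ∀ j, nt.par^[j] (nt.par x) = nt.par^[j + 1] x := by
        intro j; rw [Function.iterate_succ_apply]
      refine ⟨(Walk.cons hadj (w.copy rfl (hiter n))), by simp [hlen], ?_, ?_, ?_⟩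
      · rw [Walk.cons_isPath_iff]
        refine ⟨by simpa using hpath, ?_⟩
        rw [Walk.support_copy]
        intro hmem
        obtain ⟨j, hj, hje⟩ := (hsupp x).mp hmem
        rw [hiter j] at hje
        have := nt.iter_dep hx (n := j + 1) (by omega)
        rw [hje] at this; omega
      · intro z
        rw [Walk.support_cons, Walk.support_copy, List.mem_cons]
        constructor
        · rintro (rfl | hz)
          · exact ⟨0, by omega, rfl⟩
          · obtain ⟨j, hj, hje⟩ := (hsupp z).mp hz
            exact ⟨j + 1, by omega, by rw [← hiter j]; exact hje⟩
        · rintro ⟨j, hj, hje⟩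
          rcases Nat.eq_zero_or_pos j with rfl | hjp
          · left; exact hje.symm
          · right
            rw [hsupp z]
            refine ⟨j - 1, by omega, ?_⟩
            have hj1 : j - 1 + 1 = j := by omega
            rw [hiter (j-1), hj1]; exact hje
      · intro e he
        rw [Walk.edges_cons, Walk.edges_copy, List.mem_cons] at he
        rcases he with rfl | he
        · exact ⟨0, by omega, by simp⟩
        · obtain ⟨j, hj, hje⟩ := hedge e he
          exact ⟨j + 1, by omega, by rw [hje, hiter j, hiter (j+1)]⟩
  exact fun {n} h => H n x hx h

end NTOn

end PWaux

namespace PWaux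

variable {V : Type} [Fintype V]
set_option linter.unusedSectionVars false

lemma reachIn_support {G : SimpleGraph V} {T : Set V} :
    ∀ {a b : V} (w : G.Walk a b), (∀ z ∈ w.support, z ∈ T) → ∀ z ∈ w.support, ReachIn G T a z := by
  intro a b w
  induction w with
  | nil =>
    intro hs z hz
    simp only [Walk.support_nil, List.mem_singleton] at hz
    subst hz; exact reachIn_refl (hs _ (by simp))
  | @cons a c d hadj p ih =>
    intro hs z hz
    simp only [Walk.support_cons, List.mem_cons] at hz
    rcases hz with rfl | hz
    · exact reachIn_refl (hs z (by simp))
    · refine reachIn_trans (reachIn_adj hadj (hs a (by simp)) (hs c (by simp))) ?_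
      exact ih (fun w hw => hs w (by simp [hw])) z hz

lemma walk_avoid [DecidableEq V] {G : SimpleGraph V} {S C : Finset V} :
    ∀ {x r : V} (w : G.Walk x r), (∀ a b, a ∈ C → b ∈ S → b ≠ r → G.Adj a b → b ∈ C) →
      (∀ z ∈ w.support, z ∈ S) → x ∈ S → x ∉ C → ReachIn G ↑(S \ C) x r := by
  intro x r w
  induction w with
  | nil =>
    intro _ _ hx hxc
    exact reachIn_refl (by simp [hx, hxc])
  | @cons a c d hadj p ih =>
    intro hclosed hs hx hxc
    by_cases har : a = d
    · subst har; exact reachIn_refl (by simp [hx, hxc])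
    by_cases hcC : c ∈ C
    · exact absurd (hclosed c a hcC hx har hadj.symm) hxc
    · have hc : c ∈ S := hs c (by simp)
      refine reachIn_trans (reachIn_adj hadj (by simp [hx, hxc]) (by simp [hc, hcC])) ?_
      exact ih hclosed (fun z hz => hs z (by simp [hz])) hc hcC

lemma exists_NTOn [DecidableEq V] (G : SimpleGraph V) :
    ∀ (n : ℕ) (S : Finset V) (r : V), S.card ≤ n → r ∈ S →
      (∀ x ∈ S, ∀ y ∈ S, ReachIn G ↑S x y) → Nonempty (NTOn G S r) := by
  intro n
  induction n with
  | zero =>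
    intro S r h hr _
    have : 0 < S.card := Finset.card_pos.mpr ⟨r, hr⟩
    omega
  | succ n ih =>
    intro S r hcard hr hconn
    by_cases h1 : S.card ≤ 1
    · -- trivial case S = {r}
      have hS : ∀ x ∈ S, x = r := by
        intro x hx
        by_contra hne
        have : 1 < S.card := Finset.one_lt_card.mpr ⟨x, hx, r, hr, hne⟩
        omega
      refine ⟨⟨id, fun _ => 0, fun _ => 0, hr, ?_, rfl, ?_, rfl, ?_, ?_, ?_, ?_, ?_⟩⟩
      · intro x hx; simpa [hS x hx] using hr
      · intro x hx hxr; exact absurd (hS x hx) hxr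
      · intro x hx hxr; exact absurd (hS x hx) hxr
      · intro x hx y hy hadj
        rw [hS x hx, hS y hy] at hadj
        exact absurd hadj (G.loopless.irrefl r)
      · intro x hx; exact Finset.card_pos.mpr ⟨r, hr⟩
      · intro x hx y hy _; rw [hS x hx, hS y hy]
      · intro x hx a ha b hb c hc _ _ _ _
        refine ⟨0, ?_⟩
        simp [hS x hx, hS c hc]
    · -- main case
      push_neg at h1
      classical
      -- find a neighbor u of r in S
      obtain ⟨x0, hx0, hx0r⟩ : ∃ x ∈ S, x ≠ r := by
        obtain ⟨a, ha, b, hb, hab⟩ := Finset.one_lt_card.mp h1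
        by_cases har : a = r
        · exact ⟨b, hb, by rw [har] at hab; exact fun h => hab (h ▸ rfl)⟩
        · exact ⟨a, ha, har⟩
      obtain ⟨w0, hw0⟩ := hconn r hr x0 hx0
      obtain ⟨u, hadjru, huS⟩ : ∃ u, G.Adj r u ∧ u ∈ S := by
        cases w0 with
        | nil => exact absurd rfl hx0r.symm
        | cons hadj p => exact ⟨_, hadj, hw0 _ (by simp)⟩
      have hur : u ≠ r := hadjru.ne'
      set S' : Finset V := S.erase r with hS'def
      have huS' : u ∈ S' := Finset.mem_erase.mpr ⟨hur, huS⟩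
      set C : Finset V := S'.filter (fun x => ReachIn G ↑S' u x) with hCdef
      have hmemC : ∀ x, x ∈ C ↔ x ∈ S' ∧ ReachIn G ↑S' u x := by
        intro x; simp [hCdef]
      have huC : u ∈ C := (hmemC u).mpr ⟨huS', reachIn_refl (by simpa using huS')⟩
      have hCS' : C ⊆ S' := Finset.filter_subset _ _
      have hCS : C ⊆ S := hCS'.trans (Finset.erase_subset _ _)
      have hrC : r ∉ C := fun h => (Finset.mem_erase.mp (hCS' h)).1 rfl
      set R : Finset V := S \ C with hRdef
      have hmemR : ∀ x, x ∈ R ↔ x ∈ S ∧ x ∉ C := by intro x; simp [hRdef]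
      have hrR : r ∈ R := (hmemR r).mpr ⟨hr, hrC⟩
      have huR : u ∉ R := fun h => ((hmemR u).mp h).2 huC
      have hRS : R ⊆ S := Finset.sdiff_subset
      -- closure property of C
      have hclosed : ∀ a b, a ∈ C → b ∈ S → b ≠ r → G.Adj a b → b ∈ C := by
        intro a b haC hbS hbr hadj
        have hbS' : b ∈ S' := Finset.mem_erase.mpr ⟨hbr, hbS⟩
        obtain ⟨haS', hreach⟩ := (hmemC a).mp haC
        exact (hmemC b).mpr ⟨hbS', reachIn_trans hreach
          (reachIn_adj hadj (by simpa using haS') (by simpa using hbS'))⟩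
      -- connectivity of C
      have hCu : ∀ x ∈ C, ReachIn G ↑C u x := by
        intro x hxC
        obtain ⟨hxS', hreach⟩ := (hmemC x).mp hxC
        obtain ⟨w, hw⟩ := hreach
        refine ⟨w, ?_⟩
        intro z hz
        have := reachIn_support w hw z hz
        have hzS' : z ∈ ↑S' := hw z hz
        exact Finset.mem_coe.mpr ((hmemC z).mpr ⟨by simpa using hzS', this⟩)
      have hCconn : ∀ x ∈ C, ∀ y ∈ C, ReachIn G ↑C x y :=
        fun x hx y hy => reachIn_trans (reachIn_symm (hCu x hx)) (hCu y hy)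
      -- connectivity of R
      have hRr : ∀ x ∈ R, ReachIn G ↑R x r := by
        intro x hxR
        obtain ⟨hxS, hxC⟩ := (hmemR x).mp hxR
        obtain ⟨w, hw⟩ := hconn x hxS r hr
        exact walk_avoid w hclosed hw hxS hxC
      have hRconn : ∀ x ∈ R, ∀ y ∈ R, ReachIn G ↑R x y :=
        fun x hx y hy => reachIn_trans (hRr x hx) (reachIn_symm (hRr y hy))
      -- cardinalities
      have hcardC : C.card ≤ n := by
        have h2 : C.card ≤ S'.card := Finset.card_le_card hCS'
        have h3 : S'.card = S.card - 1 := Finset.card_erase_of_mem hr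
        omega
      have hcardR : R.card ≤ n := by
        have : R ⊂ S := Finset.ssubset_iff_of_subset hRS |>.mpr ⟨u, huS, huR⟩
        have := Finset.card_lt_card this
        omega
      obtain ⟨ntC⟩ := ih C u hcardC huC hCconn
      obtain ⟨ntR⟩ := ih R r hcardR hrR hRconn
      have hcardsum : R.card + C.card = S.card := by
        have h2 : C.card ≤ S.card := Finset.card_le_card hCS
        have h3 := Finset.card_sdiff_add_card_eq_card hCS
        rw [← hRdef] at h3
        omega
      set gpar : V → V := fun x => if x ∈ C then (if x = u then r else ntC.par x) else ntR.par x with hgpar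
      set gdep : V → ℕ := fun x => if x ∈ C then ntC.dep x + 1 else ntR.dep x with hgdep
      set gnum : V → ℕ := fun x => if x ∈ C then R.card + ntC.num x else ntR.num x with hgnum
      have hgparC : ∀ x ∈ C, x ≠ u → gpar x = ntC.par x := by
        intro x hx hxu; simp only [hgpar]; simp [hx, hxu]
      have hgparu : gpar u = r := by simp only [hgpar]; simp [huC]
      have hgparR : ∀ x, x ∉ C → gpar x = ntR.par x := by
        intro x hx; simp only [hgpar]; simp [hx]
      have hgr : ∀ j : ℕ, gpar^[j] r = r := by
        intro j; apply Function.iterate_fixed; rw [hgparR r hrC, ntR.par_self]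
      have liftR : ∀ x ∈ R, ∀ m : ℕ, gpar^[m] x = ntR.par^[m] x ∧ gpar^[m] x ∈ R := by
        intro x hx m
        induction m with
        | zero => exact ⟨rfl, hx⟩
        | succ m ihm =>
          obtain ⟨he, hm⟩ := ihm
          have hyR : ntR.par^[m] x ∈ R := he ▸ hm
          have hyC : ntR.par^[m] x ∉ C := ((hmemR _).mp hyR).2
          rw [Function.iterate_succ_apply', Function.iterate_succ_apply', he, hgparR _ hyC]
          exact ⟨rfl, ntR.par_mem _ hyR⟩
      have liftC : ∀ x ∈ C, ∀ m : ℕ, m ≤ ntC.dep x → gpar^[m] x = ntC.par^[m] x ∧ gpar^[m] x ∈ C := by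
        intro x hx m
        induction m with
        | zero => intro _; exact ⟨rfl, hx⟩
        | succ m ihm =>
          intro hle
          obtain ⟨he, hm⟩ := ihm (by omega)
          have hyC : ntC.par^[m] x ∈ C := he ▸ hm
          have hyu : ntC.par^[m] x ≠ u := by
            intro h
            have h2 := ntC.iter_dep hx (n := m) (by omega)
            rw [h, ntC.dep_r] at h2; omega
          rw [Function.iterate_succ_apply', Function.iterate_succ_apply', he, hgparC _ hyC hyu]
          exact ⟨rfl, ntC.par_mem _ hyC⟩
      have chainC_all : ∀ x ∈ C, ∀ m : ℕ, gpar^[m] x ∈ C ∨ gpar^[m] x = r := by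
        intro x hx m
        induction m with
        | zero => exact Or.inl hx
        | succ m ihm =>
          rw [Function.iterate_succ_apply']
          rcases ihm with h | h
          · by_cases hyu : gpar^[m] x = u
            · rw [hyu, hgparu]; right; rfl
            · left; rw [hgparC _ h hyu]; exact ntC.par_mem _ h
          · right; rw [h, hgparR r hrC, ntR.par_self]
      have chainC_late : ∀ a ∈ C, ∀ m : ℕ, ntC.dep a < m → gpar^[m] a = r := by
        intro a ha m hm
        obtain ⟨j, rfl⟩ : ∃ j, m = j + (ntC.dep a + 1) := ⟨m - (ntC.dep a + 1), by omega⟩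
        rw [Function.iterate_add_apply]
        have h1 : gpar^[ntC.dep a + 1] a = r := by
          rw [Function.iterate_succ_apply', (liftC a ha (ntC.dep a) le_rfl).1,
            ntC.iter_root ha le_rfl, hgparu]
        rw [h1, hgr]
      have ancm : ∀ c ∈ S, ∃ m, gpar^[m] c = r := by
        intro c hc
        by_cases hcC : c ∈ C
        · exact ⟨ntC.dep c + 1, chainC_late c hcC _ (by omega)⟩
        · have hcR : c ∈ R := (hmemR c).mpr ⟨hc, hcC⟩
          exact ⟨ntR.dep c, by rw [(liftR c hcR _).1, ntR.iter_root hcR le_rfl]⟩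
      have anc_to_C : ∀ x ∈ C, ∀ a ∈ S, (∃ m, gpar^[m] a = x) → a ∈ C ∧ ∃ m, ntC.par^[m] a = x := by
        rintro x hx a ha ⟨m, hm⟩
        by_cases haC : a ∈ C
        · refine ⟨haC, ?_⟩
          by_cases hmd : m ≤ ntC.dep a
          · exact ⟨m, by rw [← (liftC a haC m hmd).1]; exact hm⟩
          · exfalso
            rw [chainC_late a haC m (by omega)] at hm
            exact hrC (hm ▸ hx)
        · exfalso
          have haR : a ∈ R := (hmemR a).mpr ⟨ha, haC⟩
          have := (liftR a haR m).2
          rw [hm] at this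
          exact ((hmemR x).mp this).2 hx
      have anc_to_R : ∀ x ∈ R, x ≠ r → ∀ a ∈ S, (∃ m, gpar^[m] a = x) → a ∈ R ∧ ∃ m, ntR.par^[m] a = x := by
        rintro x hx hxr a ha ⟨m, hm⟩
        by_cases haC : a ∈ C
        · exfalso
          rcases chainC_all a haC m with h | h
          · exact ((hmemR x).mp hx).2 (hm ▸ h)
          · exact hxr (by rw [← hm, h])
        · have haR : a ∈ R := (hmemR a).mpr ⟨ha, haC⟩
          exact ⟨haR, m, by rw [← (liftR a haR m).1]; exact hm⟩
      have ancC_of : ∀ x ∈ C, ∀ y ∈ C, (∃ m, ntC.par^[m] y = x) → ∃ m, gpar^[m] y = x := by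
        intro x hx y hy h
        obtain ⟨m, hm, he⟩ := ntC.anc_norm hy h
        exact ⟨m, by rw [(liftC y hy m hm).1]; exact he⟩
      have ancR_of : ∀ x y : V, y ∈ R → (∃ m, ntR.par^[m] y = x) → ∃ m, gpar^[m] y = x := by
        rintro x y hy ⟨m, hm⟩
        exact ⟨m, by rw [(liftR y hy m).1]; exact hm⟩
      refine ⟨⟨gpar, gdep, gnum, hr, ?_, ?_, ?_, ?_, ?_, ?_, ?_, ?_, ?_⟩⟩
      · -- par_mem
        intro x hx
        by_cases hxC : x ∈ C
        · by_cases hxu : x = u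
          · subst hxu; rw [hgparu]; exact hr
          · rw [hgparC x hxC hxu]; exact hCS (ntC.par_mem x hxC)
        · rw [hgparR x hxC]
          exact hRS (ntR.par_mem x ((hmemR x).mpr ⟨hx, hxC⟩))
      · -- par_self
        rw [hgparR r hrC]; exact ntR.par_self
      · -- par_adj
        intro x hx hxr
        by_cases hxC : x ∈ C
        · by_cases hxu : x = u
          · subst hxu; rw [hgparu]; exact hadjru.symm
          · rw [hgparC x hxC hxu]; exact ntC.par_adj x hxC hxu
        · rw [hgparR x hxC]
          exact ntR.par_adj x ((hmemR x).mpr ⟨hx, hxC⟩) hxr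
      · -- dep_r
        simp only [hgdep]; simp [hrC, ntR.dep_r]
      · -- dep_par
        intro x hx hxr
        by_cases hxC : x ∈ C
        · by_cases hxu : x = u
          · subst hxu
            simp only [hgdep]
            rw [hgparu]
            simp [huC, hrC, ntR.dep_r, ntC.dep_r]
          · have hpC : ntC.par x ∈ C := ntC.par_mem x hxC
            simp only [hgdep]
            rw [hgparC x hxC hxu]
            simp only [hxC, if_true, hpC]
            rw [ntC.dep_par x hxC hxu]
        · have hxR : x ∈ R := (hmemR x).mpr ⟨hx, hxC⟩
          have hpR : ntR.par x ∈ R := ntR.par_mem x hxR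
          have hpC : ntR.par x ∉ C := ((hmemR _).mp hpR).2
          simp only [hgdep]
          rw [hgparR x hxC]
          simp only [hxC, if_false, hpC]
          exact ntR.dep_par x hxR hxr
      · -- normal
        intro x hx y hy hadj
        by_cases hxC : x ∈ C <;> by_cases hyC : y ∈ C
        · rcases ntC.normal x hxC y hyC hadj with h | h
          · exact Or.inl (ancC_of x hxC y hyC h)
          · exact Or.inr (ancC_of y hyC x hxC h)
        · by_cases hyr : y = r
          · subst hyr; exact Or.inr (ancm x hx)
          · exact absurd (hclosed x y hxC hy hyr hadj) hyC
        · by_cases hxr : x = r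
          · subst hxr; exact Or.inl (ancm y hy)
          · exact absurd (hclosed y x hyC hx hxr hadj.symm) hxC
        · have hxR : x ∈ R := (hmemR x).mpr ⟨hx, hxC⟩
          have hyR : y ∈ R := (hmemR y).mpr ⟨hy, hyC⟩
          rcases ntR.normal x hxR y hyR hadj with h | h
          · exact Or.inl (ancR_of x y hyR h)
          · exact Or.inr (ancR_of y x hxR h)
      · -- num_lt
        intro x hx
        by_cases hxC : x ∈ C
        · have := ntC.num_lt x hxC
          simp only [hgnum]; simp only [hxC, if_true]; omega
        · have := ntR.num_lt x ((hmemR x).mpr ⟨hx, hxC⟩)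
          simp only [hgnum]; simp only [hxC, if_false]; omega
      · -- num_inj
        intro x hx y hy he
        simp only [hgnum] at he
        by_cases hxC : x ∈ C <;> by_cases hyC : y ∈ C <;>
          simp only [hxC, hyC, if_true, if_false] at he
        · exact ntC.num_inj x hxC y hyC (by omega)
        · have := ntR.num_lt y ((hmemR y).mpr ⟨hy, hyC⟩); omega
        · have := ntR.num_lt x ((hmemR x).mpr ⟨hx, hxC⟩); omega
        · exact ntR.num_inj x ((hmemR x).mpr ⟨hx, hxC⟩) y ((hmemR y).mpr ⟨hy, hyC⟩) he
      · -- num_int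
        intro x hx a ha b hb c hc hax hbx h1 h2
        simp only [hgnum] at h1 h2
        by_cases hxr : x = r
        · subst hxr; exact ancm c hc
        by_cases hxC : x ∈ C
        · obtain ⟨haC, hanca⟩ := anc_to_C x hxC a ha hax
          obtain ⟨hbC, hancb⟩ := anc_to_C x hxC b hb hbx
          have hcC : c ∈ C := by
            by_contra hcC
            have hcR : c ∈ R := (hmemR c).mpr ⟨hc, hcC⟩
            have h3 := ntR.num_lt c hcR
            simp only [haC, hcC, if_true, if_false] at h1
            omega
          simp only [haC, hbC, hcC, if_true] at h1 h2
          exact ancC_of x hxC c hcC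
            (ntC.num_int x hxC a haC b hbC c hcC hanca hancb (by omega) (by omega))
        · have hxR : x ∈ R := (hmemR x).mpr ⟨hx, hxC⟩
          obtain ⟨haR, hanca⟩ := anc_to_R x hxR hxr a ha hax
          obtain ⟨hbR, hancb⟩ := anc_to_R x hxR hxr b hb hbx
          have haC : a ∉ C := ((hmemR a).mp haR).2
          have hbC : b ∉ C := ((hmemR b).mp hbR).2
          have hcC : c ∉ C := by
            intro hcC
            have h3 := ntR.num_lt b ((hmemR b).mpr ⟨hb, hbC⟩)
            simp only [hbC, hcC, if_true, if_false] at h2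
            omega
          have hcR : c ∈ R := (hmemR c).mpr ⟨hc, hcC⟩
          simp only [haC, hbC, hcC, if_false] at h1 h2
          exact ancR_of x c hcR (ntR.num_int x hxR a haR b hbR c hcR hanca hancb h1 h2)

end PWaux

namespace PWaux

variable {V : Type} [Fintype V]
set_option linter.unusedSectionVars false
set_option maxHeartbeats 1000000

lemma sum_Icc_bot {M : Type} [AddCommMonoid M] {a b : ℕ} (h : a ≤ b) (f : ℕ → M) :
    ∑ j ∈ Finset.Icc a b, f j = f a + ∑ j ∈ Finset.Icc (a+1) b, f j := by
  rw [← Finset.add_sum_erase _ f (Finset.mem_Icc.mpr ⟨le_rfl, h⟩), Finset.Icc_erase_left,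
    Finset.Icc_add_one_left_eq_Ioc]

lemma append_isPath {G : SimpleGraph V} {a b c : V} {p : G.Walk a b} {q : G.Walk b c}
    (hp : p.IsPath) (hq : q.IsPath) (hint : ∀ y, y ∈ p.support → y ∈ q.support → y = b) :
    (p.append q).IsPath := by
  rw [Walk.isPath_def, Walk.support_append]
  refine List.Nodup.append hp.support_nodup
    (hq.support_nodup.sublist (List.tail_sublist _)) ?_
  intro y hyp hyq
  have hyq' : y ∈ q.support := List.mem_of_mem_tail hyq
  have hyb := hint y hyp hyq'
  subst hyb
  have hnd := hq.support_nodup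
  rw [q.support_eq_cons] at hnd
  exact (List.nodup_cons.mp hnd).1 hyq

lemma cyc_le {G : SimpleGraph V} {t : ℕ} (hc : CircumEq G t) {x : V} (w : G.Walk x x)
    (hw : w.IsCycle) : w.length ≤ t :=
  hc.1 _ ⟨x, w, hw, rfl⟩

end PWaux

namespace PWaux

variable {V : Type} [Fintype V]
set_option linter.unusedSectionVars false
set_option linter.unusedVariables false
set_option maxHeartbeats 2000000

lemma sum_Icc_shift (f : ℕ → ℤ) (a b cc : ℕ) :
    ∑ j ∈ Finset.Icc (a+cc) (b+cc), f j = ∑ j ∈ Finset.Icc a b, f (j + cc) := by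
  rw [← Finset.map_add_right_Icc, Finset.sum_map]
  simp [addRightEmbedding]

lemma depth_bound {G : SimpleGraph V} {r : V} (nt : NTOn G Finset.univ r)
    (hK : KConn G 2) {t : ℕ} (hc : CircumEq G t) (z : V) (hz2 : 2 ≤ nt.dep z) :
    3 ≤ t ∧ 2 * nt.dep z + 3 * t ≤ t * t + 4 := by
  classical
  have hmem : ∀ x : V, x ∈ (Finset.univ : Finset V) := fun x => Finset.mem_univ x
  set h := nt.dep z with hhdef
  set v : ℕ → V := fun j => nt.par^[h - j] z with hvdef
  have dep_v : ∀ j, j ≤ h → nt.dep (v j) = j := by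
    intro j hj
    have h1 := nt.iter_dep (hmem z) (n := h - j) (by omega)
    simp only [hvdef]
    omega
  have v_inj : ∀ i j, i ≤ h → j ≤ h → v i = v j → i = j := by
    intro i j hi hj he
    have := dep_v i hi
    rw [he, dep_v j hj] at this
    omega
  have v_h : v h = z := by simp [hvdef]
  have v_0 : v 0 = r := by
    simp only [hvdef, Nat.sub_zero]
    exact nt.iter_root (hmem z) le_rfl
  have anc_v : ∀ i j, i ≤ j → j ≤ h → nt.Anc (v i) (v j) := by
    intro i j hij hjh
    refine ⟨j - i, ?_⟩
    simp only [hvdef]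
    rw [← Function.iterate_add_apply]
    congr 1
    omega
  have v_par : ∀ j, j + 1 ≤ h → nt.par (v (j+1)) = v j := by
    intro j hj
    simp only [hvdef]
    have he : h - j = (h - (j+1)) + 1 := by omega
    rw [he, Function.iterate_succ_apply']
  have v_adj : ∀ j, j + 1 ≤ h → G.Adj (v (j+1)) (v j) := by
    intro j hj
    have hne : v (j+1) ≠ r := by
      intro he
      have := dep_v (j+1) hj
      rw [he, nt.dep_r] at this
      omega
    have := nt.par_adj (v (j+1)) (hmem _) hne
    rwa [v_par j hj] at this
  have anc_of_v : ∀ j, j ≤ h → ∀ y, nt.Anc y (v j) → ∃ i, i ≤ j ∧ y = v i := by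
    intro j hj y hy
    obtain ⟨n, hn, hnv⟩ := nt.anc_norm (hmem _) hy
    rw [dep_v j hj] at hn
    refine ⟨j - n, by omega, ?_⟩
    rw [← hnv]
    simp only [hvdef]
    rw [← Function.iterate_add_apply]
    congr 1
    omega
  -- escape from subtrees, via 2-connectivity
  have esc : ∀ i, 1 ≤ i → i + 1 ≤ h →
      ∃ j, j + 1 ≤ i ∧ ∃ x, nt.Anc (v (i+1)) x ∧ G.Adj x (v j) := by
    intro i hi1 hih
    have hconn := hK.2 {v i} (Set.finite_singleton _) (by simp)
    have hvh : (v h) ∈ ({v i} : Set V)ᶜ := by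
      simp only [Set.mem_compl_iff, Set.mem_singleton_iff]
      intro he
      have := v_inj h i le_rfl (by omega) he
      omega
    have hv0 : (v 0) ∈ ({v i} : Set V)ᶜ := by
      simp only [Set.mem_compl_iff, Set.mem_singleton_iff]
      intro he
      have := v_inj 0 i (by omega) (by omega) he
      omega
    have hreach := hconn.preconnected ⟨v h, hvh⟩ ⟨v 0, hv0⟩
    obtain ⟨w, hw⟩ := reachIn_of_induce hreach
    have hDh : nt.Anc (v (i+1)) (v h) := anc_v (i+1) h (by omega) le_rfl
    have hD0 : ¬ nt.Anc (v (i+1)) (v 0) := by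
      intro hcon
      have := nt.anc_dep (hmem _) hcon
      rw [dep_v (i+1) (by omega), dep_v 0 (by omega)] at this
      omega
    obtain ⟨x, y, hx, hy, hyT, hadj⟩ := exists_exit w hw hDh hD0
    rcases nt.normal x (hmem x) y (hmem y) hadj with hxy | hyx
    · exact absurd (nt.anc_trans hx hxy) hy
    · -- hyx : ∃ n, par^[n] x = y, i.e. y is an ancestor of x
      rcases nt.anc_total (hmem x) hyx hx with h1 | h1
      · -- y ancestor of v (i+1)
        obtain ⟨jy, hjy, rfl⟩ := anc_of_v (i+1) (by omega) y h1
        have hne1 : jy ≠ i + 1 := by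
          intro he
          subst he
          exact hy (nt.anc_refl _)
        have hne2 : jy ≠ i := by
          intro he
          subst he
          simp [Set.mem_compl_iff] at hyT
        exact ⟨jy, by omega, x, hx, hadj⟩
      · exact absurd h1 hy
  -- minimal escape target
  obtain ⟨f, hfspec, hfmin⟩ : ∃ f : ℕ → ℕ,
      (∀ i, 1 ≤ i → i + 1 ≤ h →
        ((f i) + 1 ≤ i ∧ ∃ x, nt.Anc (v (i+1)) x ∧ G.Adj x (v (f i)))) ∧
      (∀ i, 1 ≤ i → i + 1 ≤ h → ∀ j, j < f i →
        ¬(j + 1 ≤ i ∧ ∃ x, nt.Anc (v (i+1)) x ∧ G.Adj x (v j))) := by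
    refine ⟨fun i => if hi : 1 ≤ i ∧ i + 1 ≤ h then Nat.find (esc i hi.1 hi.2) else 0, ?_, ?_⟩
    · intro i h1 h2
      simp only [dif_pos (⟨h1, h2⟩ : 1 ≤ i ∧ i + 1 ≤ h)]
      exact Nat.find_spec (esc i h1 h2)
    · intro i h1 h2 j hj
      simp only [dif_pos (⟨h1, h2⟩ : 1 ≤ i ∧ i + 1 ≤ h)] at hj
      exact Nat.find_min (esc i h1 h2) hj
  -- the chain
  obtain ⟨c, hc0, hcs⟩ : ∃ c : ℕ → ℕ, c 0 = h - 1 ∧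
      ∀ s, c (s+1) = if 1 ≤ c s then f (c s) else 0 :=
    ⟨fun s => Nat.rec (h - 1) (fun _ prev => if 1 ≤ prev then f prev else 0) s, rfl,
      fun s => rfl⟩
  have hcb : ∀ s, c s + 1 ≤ h := by
    intro s
    induction s with
    | zero => omega
    | succ s ih =>
      rw [hcs s]
      by_cases h1 : 1 ≤ c s
      · rw [if_pos h1]
        have := (hfspec (c s) h1 ih).1
        omega
      · rw [if_neg h1]
        omega
  have hdec : ∀ s, 1 ≤ c s → c (s+1) < c s := by
    intro s h1
    rw [hcs s, if_pos h1]
    have := (hfspec (c s) h1 (hcb s)).1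
    omega
  have hzero : ∃ s, c s = 0 := by
    have haux : ∀ s, c s = 0 ∨ c s + s ≤ h - 1 := by
      intro s
      induction s with
      | zero => right; omega
      | succ s ih =>
        by_cases h1 : 1 ≤ c s
        · have := hdec s h1
          rcases ih with h2 | h2
          · omega
          · right; omega
        · left; rw [hcs s, if_neg h1]
    rcases haux h with h1 | h1
    · exact ⟨h, h1⟩
    · exact ⟨h, by omega⟩
  set k := Nat.find hzero with hkdef
  have hk_zero : c k = 0 := Nat.find_spec hzero
  have hk_pos : ∀ s, s < k → 1 ≤ c s := by
    intro s hs
    have := Nat.find_min hzero hs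
    omega
  have hk1 : 1 ≤ k := by
    rcases Nat.eq_zero_or_pos k with h1 | h1
    · rw [h1] at hk_zero
      omega
    · exact h1
  have hstep : ∀ s, s + 1 ≤ k → c (s+1) = f (c s) := by
    intro s hs
    rw [hcs s, if_pos (hk_pos s (by omega))]
  have hcdec : ∀ s, 1 ≤ s → s ≤ k → c s < c (s-1) := by
    intro s h1 h2
    have := hdec (s-1) (hk_pos (s-1) (by omega))
    have he : s - 1 + 1 = s := by omega
    rw [he] at this
    exact this
  -- the chord witnesses
  have hXex : ∀ s, ∃ x, 1 ≤ s → s ≤ k →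
      nt.Anc (v (c (s-1) + 1)) x ∧ G.Adj x (v (c s)) := by
    intro s
    by_cases hs : 1 ≤ s ∧ s ≤ k
    · obtain ⟨hs1, hsk⟩ := hs
      have h1 : 1 ≤ c (s-1) := hk_pos (s-1) (by omega)
      have h2 : c (s-1) + 1 ≤ h := hcb (s-1)
      obtain ⟨hfb, x, hanc, hadj⟩ := hfspec (c (s-1)) h1 h2
      refine ⟨x, fun _ _ => ⟨hanc, ?_⟩⟩
      have he : c s = f (c (s-1)) := by
        have := hstep (s-1) (by omega)
        have h3 : s - 1 + 1 = s := by omega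
        rwa [h3] at this
      rw [he]
      exact hadj
    · exact ⟨z, fun a b => absurd ⟨a, b⟩ hs⟩
  choose X hX using hXex
  have hXanc : ∀ s, 1 ≤ s → s ≤ k → nt.Anc (v (c (s-1) + 1)) (X s) :=
    fun s a b => (hX s a b).1
  have hXadj : ∀ s, 1 ≤ s → s ≤ k → G.Adj (X s) (v (c s)) :=
    fun s a b => (hX s a b).2
  set m : ℕ → ℕ := fun s => Nat.findGreatest (fun j => nt.Anc (v j) (X s)) h with hmdef
  have hm_le : ∀ s, m s ≤ h := fun s => Nat.findGreatest_le h
  have hm_ge : ∀ s, 1 ≤ s → s ≤ k → c (s-1) + 1 ≤ m s := by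
    intro s h1 h2
    exact Nat.le_findGreatest (P := fun j => nt.Anc (v j) (X s)) (hcb (s-1)) (hXanc s h1 h2)
  have hm_anc : ∀ s, 1 ≤ s → s ≤ k → nt.Anc (v (m s)) (X s) := by
    intro s h1 h2
    exact Nat.findGreatest_spec (P := fun j => nt.Anc (v j) (X s)) (hcb (s-1)) (hXanc s h1 h2)
  have hm_max : ∀ s, 1 ≤ s → s ≤ k → ∀ j, j ≤ h → nt.Anc (v j) (X s) → j ≤ m s := by
    intro s h1 h2 j hj hanc
    by_contra hcon
    push_neg at hcon
    have hms : m s = Nat.findGreatest (fun j => nt.Anc (v j) (X s)) h := by rw [hmdef]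
    exact Nat.findGreatest_is_greatest (P := fun j => nt.Anc (v j) (X s)) (by omega) hj hanc
  have hm1 : m 1 = h := by
    have h1 := hm_ge 1 le_rfl hk1
    have h2 := hm_le 1
    simp only [Nat.sub_self] at h1
    omega
  have hm_le2 : ∀ s, 2 ≤ s → s ≤ k → m s ≤ c (s-2) := by
    intro s h2 hsk
    by_contra hcon
    push_neg at hcon
    have hanc : nt.Anc (v (c (s-2) + 1)) (X s) :=
      nt.anc_trans (anc_v (c (s-2) + 1) (m s) (by omega) (hm_le s)) (hm_anc s (by omega) hsk)
    have hlt : c s < f (c (s-2)) := by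
      have he : c (s-1) = f (c (s-2)) := by
        have := hstep (s-2) (by omega)
        have h3 : s - 2 + 1 = s - 1 := by omega
        rwa [h3] at this
      rw [← he]
      have d1 := hcdec s (by omega) hsk
      exact d1
    have hcc : c s + 1 ≤ c (s-2) := by
      have d1 := hcdec s (by omega) hsk
      have d2 := hcdec (s-1) (by omega) (by omega)
      have h3 : s - 1 - 1 = s - 2 := by omega
      rw [h3] at d2
      omega
    exact hfmin (c (s-2)) (hk_pos (s-2) (by omega)) (hcb (s-2)) (c s) hlt
      ⟨hcc, X s, hanc, hXadj s (by omega) hsk⟩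
  have hXdep : ∀ s, 1 ≤ s → s ≤ k → m s ≤ nt.dep (X s) := by
    intro s h1 h2
    have := nt.anc_dep (hmem (X s)) (hm_anc s h1 h2)
    rw [dep_v (m s) (hm_le s)] at this
    exact this
  set alen : ℕ → ℕ := fun s => nt.dep (X s) - m s + 1 with halendef
  have halen_eq : ∀ s', alen s' = nt.dep (X s') - m s' + 1 := fun _ => rfl
  -- path segments along the root path
  have Pseg : ∀ p q : ℕ, q ≤ p → p ≤ h → ∃ w : G.Walk (v p) (v q),
      w.length = p - q ∧ w.IsPath ∧
      (∀ y, y ∈ w.support ↔ ∃ i, q ≤ i ∧ i ≤ p ∧ y = v i) ∧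
      (∀ e ∈ w.edges, ∃ i, q ≤ i ∧ i < p ∧ e = s(v (i+1), v i)) := by
    intro p q hqp hph
    obtain ⟨w, hlen, hpath, hsupp, hedge⟩ :=
      nt.exists_climb (hmem (v p)) (n := p - q) (by rw [dep_v p hph]; omega)
    have hend : nt.par^[p - q] (v p) = v q := by
      simp only [hvdef]
      rw [← Function.iterate_add_apply]
      congr 1
      omega
    have hiterv : ∀ j, j ≤ p - q → nt.par^[j] (v p) = v (p - j) := by
      intro j hj
      simp only [hvdef]
      rw [← Function.iterate_add_apply]
      congr 1
      omega
    refine ⟨w.copy rfl hend, by simp [hlen], by simp [hpath], ?_, ?_⟩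
    · intro y
      rw [Walk.support_copy, hsupp]
      constructor
      · rintro ⟨j, hj, rfl⟩
        exact ⟨p - j, by omega, by omega, (hiterv j hj)⟩
      · rintro ⟨i, hbi, hia, rfl⟩
        exact ⟨p - i, by omega, by rw [hiterv (p - i) (by omega)]; congr 1; omega⟩
    · intro e he
      rw [Walk.edges_copy] at he
      obtain ⟨j, hj, rfl⟩ := hedge e he
      refine ⟨p - j - 1, by omega, by omega, ?_⟩
      rw [hiterv j (by omega), hiterv (j+1) (by omega)]
      have e1 : p - j - 1 + 1 = p - j := by omega
      have e2 : p - (j + 1) = p - j - 1 := by omega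
      rw [e1, e2]
  -- climbing walks within ears
  have Climb : ∀ s, 1 ≤ s → s ≤ k → ∃ w : G.Walk (X s) (v (m s)),
      w.length + 1 = alen s ∧ w.IsPath ∧
      (∀ y, y ∈ w.support → nt.Anc y (X s) ∧ nt.Anc (v (m s)) y) := by
    intro s hs1 hsk
    obtain ⟨n, hn, hnv⟩ := nt.anc_norm (hmem (X s)) (hm_anc s hs1 hsk)
    obtain ⟨cw0, hclen, hcpath, hcsupp, hcedge⟩ := nt.exists_climb (hmem (X s)) hn
    have hnm : m s + n = nt.dep (X s) := by
      have h5 := nt.iter_dep (hmem (X s)) hn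
      rw [hnv, dep_v (m s) (hm_le s)] at h5
      omega
    refine ⟨cw0.copy rfl hnv, ?_, by simp [hcpath], ?_⟩
    · rw [Walk.length_copy, hclen, halen_eq]
      omega
    · intro y hy
      rw [Walk.support_copy] at hy
      obtain ⟨j, hj, rfl⟩ := (hcsupp y).mp hy
      constructor
      · exact ⟨j, rfl⟩
      · refine ⟨n - j, ?_⟩
        rw [← Function.iterate_add_apply]
        have he : n - j + j = n := by omega
        rw [he, hnv]
  have hmcs : ∀ s, 1 ≤ s → s ≤ k → c s + 2 ≤ m s := by
    intro s hs1 hsk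
    have h1 := hm_ge s hs1 hsk
    have h2 := hcdec s hs1 hsk
    omega
  have hdepX : ∀ s, 1 ≤ s → s ≤ k → c s + 2 ≤ nt.dep (X s) := by
    intro s hs1 hsk
    have := hXdep s hs1 hsk
    have := hmcs s hs1 hsk
    omega
  -- the per-ear cycles
  have hA : ∀ s, 1 ≤ s → s ≤ k → alen s + (m s - c s) ≤ t := by
    intro s hs1 hsk
    have hcs_lt : c s + 2 ≤ m s := hmcs s hs1 hsk
    have hmsh : m s ≤ h := hm_le s
    have hcsh : c s + 1 ≤ h := hcb s
    obtain ⟨pw, hplen, hppath, hpsupp, hpedge⟩ := Pseg (m s) (c s) (by omega) (hm_le s)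
    obtain ⟨cw, hclen, hcpath, hcsupp⟩ := Climb s hs1 hsk
    set Q := pw.reverse.append cw.reverse with hQdef
    have hQpath : Q.IsPath := by
      refine append_isPath hppath.reverse hcpath.reverse ?_
      intro y hyp hyc
      rw [Walk.support_reverse, List.mem_reverse] at hyp hyc
      obtain ⟨i, hqi, hip, rfl⟩ := (hpsupp y).mp hyp
      obtain ⟨ha1, ha2⟩ := hcsupp _ hyc
      have hi1 : i ≤ m s := hm_max s hs1 hsk i (by omega) ha1
      have hi2 : m s ≤ i := by
        have := nt.anc_dep (hmem _) ha2
        rw [dep_v (m s) (hm_le s), dep_v i (by omega)] at this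
        exact this
      have : i = m s := by omega
      rw [this]
    have hnotmem : s(X s, v (c s)) ∉ Q.edges := by
      rw [hQdef, Walk.edges_append]
      intro hmem'
      rcases List.mem_append.mp hmem' with he | he
      · rw [Walk.edges_reverse, List.mem_reverse] at he
        obtain ⟨i, hqi, hip, heq⟩ := hpedge _ he
        rcases Sym2.eq_iff.mp heq with ⟨h1, h2⟩ | ⟨h1, h2⟩
        · have hie : c s = i := v_inj (c s) i (by omega) (by omega) h2
          have hd : nt.dep (X s) = i + 1 := by
            rw [h1, dep_v (i+1) (by omega)]
          have := hdepX s hs1 hsk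
          omega
        · have : c s = i + 1 := v_inj (c s) (i+1) (by omega) (by omega) h2
          omega
      · rw [Walk.edges_reverse, List.mem_reverse] at he
        have hvc : v (c s) ∈ cw.support := Walk.snd_mem_support_of_mem_edges _ he
        have := (hcsupp _ hvc).2
        have := nt.anc_dep (hmem _) this
        rw [dep_v (m s) (hm_le s), dep_v (c s) (by omega)] at this
        omega
    have hcyc : (Walk.cons (hXadj s hs1 hsk) Q).IsCycle :=
      (Walk.cons_isCycle_iff Q (hXadj s hs1 hsk)).mpr ⟨hQpath, hnotmem⟩
    have hlen : (Walk.cons (hXadj s hs1 hsk) Q).length = alen s + (m s - c s) := by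
      rw [Walk.length_cons, hQdef, Walk.length_append, Walk.length_reverse,
        Walk.length_reverse, hplen]
      omega
    have := cyc_le hc _ hcyc
    omega
  have ht3 : 3 ≤ t := by
    have h1 := hA 1 le_rfl hk1
    have h2 := hm_ge 1 le_rfl hk1
    have h3 : c 1 < c 0 := hcdec 1 le_rfl hk1
    have h4 : 1 ≤ alen 1 := by rw [halen_eq]; omega
    simp only [Nat.sub_self] at h2
    omega
  -- the ear walks (from v (m s) down to the chord foot v (c s))
  have EarW : ∀ s, 1 ≤ s → s ≤ k → ∃ w : G.Walk (v (m s)) (v (c s)),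
      w.length = alen s ∧ w.IsPath ∧
      (∀ y, y ∈ w.support → y = v (c s) ∨ (nt.Anc y (X s) ∧ nt.Anc (v (m s)) y)) := by
    intro s hs1 hsk
    obtain ⟨cw, hclen, hcpath, hcsupp⟩ := Climb s hs1 hsk
    have hmsh : m s ≤ h := hm_le s
    have hcsh : c s + 1 ≤ h := hcb s
    have h6 := hmcs s hs1 hsk
    have hvcs : v (c s) ∉ cw.support := by
      intro hcon
      have := (hcsupp _ hcon).2
      have := nt.anc_dep (hmem _) this
      rw [dep_v (m s) (hm_le s), dep_v (c s) (by omega)] at this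
      omega
    refine ⟨(Walk.cons (hXadj s hs1 hsk).symm cw).reverse, ?_, ?_, ?_⟩
    · rw [Walk.length_reverse, Walk.length_cons]
      omega
    · exact ((Walk.cons_isPath_iff _ _).mpr ⟨hcpath, hvcs⟩).reverse
    · intro y hy
      rw [Walk.support_reverse, List.mem_reverse, Walk.support_cons, List.mem_cons] at hy
      rcases hy with rfl | hy
      · exact Or.inl rfl
      · exact Or.inr (hcsupp _ hy)
  -- facts about c beyond k, and X avoiding higher subtrees
  have hc_after : ∀ j, k ≤ j → c j = 0 := by
    intro j hj
    induction j with
    | zero =>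
      have hk0 : k = 0 := by omega
      exact hk0 ▸ hk_zero
    | succ j ihj =>
      rcases Nat.lt_or_ge k (j+1) with h' | h'
      · have hcj : c j = 0 := ihj (by omega)
        rw [hcs j, if_neg (by omega)]
      · have : k = j + 1 := by omega
        rw [← this]; exact hk_zero
  have hXnotD : ∀ s, 2 ≤ s → s ≤ k → ¬ nt.Anc (v (c (s-2) + 1)) (X s) := by
    intro s h2 hsk hcon
    have ha := hm_max s (by omega) hsk (c (s-2) + 1) (hcb (s-2)) hcon
    have hb := hm_le2 s h2 hsk
    omega
  set M : ℕ → ℕ := fun j => if j ≤ k then m j else 0 with hMdef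
  have hM_eq : ∀ j, j ≤ k → M j = m j := by
    intro j hj; simp only [hMdef]; rw [if_pos hj]
  have hM_eq' : ∀ j, k < j → M j = 0 := by
    intro j hj; simp only [hMdef]; rw [if_neg (by omega)]
  -- the double-chain induction
  have CL : ∀ d s, s + d = k → 1 ≤ s →
      ∃ W1 : G.Walk (v (m s)) (v 0), ∃ W2 : G.Walk (v (M (s+1))) (v 0),
        W1.IsPath ∧ W2.IsPath ∧
        (∀ y, y ∈ W1.support → y ∈ W2.support → y = v 0) ∧
        (∀ j, j ≤ h → v j ∈ W1.support → j = m s ∨ j ≤ c s) ∧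
        (∀ j, j ≤ h → v j ∈ W2.support → j = M (s+1) ∨ j ≤ c (s+1)) ∧
        (2 ≤ s → ∀ y, y ∈ W1.support → (∀ j, j ≤ h → y ≠ v j) →
          ¬ nt.Anc (v (c (s-2) + 1)) y) ∧
        (∀ y, y ∈ W2.support → (∀ j, j ≤ h → y ≠ v j) →
          ¬ nt.Anc (v (c (s-1) + 1)) y) ∧
        W1.length + W2.length =
          (∑ j ∈ Finset.Icc s k, alen j) + (∑ j ∈ Finset.Icc s (k-1), (c j - M (j+2))) := by
    intro d
    induction d with
    | zero =>
      intro s hsd hs1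
      have hsk : s = k := by omega
      obtain ⟨ew, hewlen, hewpath, hewsupp⟩ := EarW s hs1 (le_of_eq hsk)
      have hck0 : c s = 0 := by rw [hsk]; exact hk_zero
      have hMs1 : M (s+1) = 0 := hM_eq' (s+1) (by omega)
      refine ⟨ew.copy rfl (by rw [hck0]), (Walk.nil : G.Walk (v 0) (v 0)).copy (by rw [hMs1]) rfl,
        by simp [hewpath], by simp, ?_, ?_, ?_, ?_, ?_, ?_⟩
      · intro y hy1 hy2
        rw [Walk.support_copy, Walk.support_nil] at hy2
        simpa using hy2
      · intro j hj hjmem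
        rw [Walk.support_copy] at hjmem
        rcases hewsupp _ hjmem with he | ⟨ha1, ha2⟩
        · right
          have := v_inj j (c s) hj (by omega) he
          omega
        · left
          have h1 := hm_max s hs1 (le_of_eq hsk) j hj ha1
          have h2 := nt.anc_dep (hmem _) ha2
          rw [dep_v (m s) (hm_le s), dep_v j hj] at h2
          omega
      · intro j hj hjmem
        rw [Walk.support_copy, Walk.support_nil] at hjmem
        simp only [List.mem_singleton] at hjmem
        have := v_inj j 0 hj (by omega) hjmem
        omega
      · intro h2s y hy hoff
        rw [Walk.support_copy] at hy
        rcases hewsupp _ hy with he | ⟨ha1, ha2⟩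
        · exact absurd he (hoff (c s) (by omega))
        · intro hcon
          exact hXnotD s h2s (le_of_eq hsk) (nt.anc_trans hcon ha1)
      · intro y hy hoff
        rw [Walk.support_copy, Walk.support_nil] at hy
        simp only [List.mem_singleton] at hy
        exact absurd hy (hoff 0 (by omega))
      · rw [Walk.length_copy, Walk.length_copy, Walk.length_nil, hewlen, hsk]
        rw [Finset.Icc_self, Finset.sum_singleton]
        rw [Finset.Icc_eq_empty (by omega), Finset.sum_empty]
    | succ d ihd =>
      intro s hsd hs1
      have hs1k : s + 1 ≤ k := by omega
      have hsk : s ≤ k := by omega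
      obtain ⟨W1o, W2o, hP1o, hP2o, hIo, h3o, h4o, h5o, h6o, h7o⟩ :=
        ihd (s+1) (by omega) (by omega)
      have e1 : s + 1 + 1 = s + 2 := by omega
      have e2 : s + 1 - 1 = s := by omega
      have e3 : s + 1 - 2 = s - 1 := by omega
      replace h4o : ∀ j, j ≤ h → v j ∈ W2o.support → j = M (s+2) ∨ j ≤ c (s+2) := by
        intro j hj hjm
        have := h4o j hj hjm
        rwa [e1] at this
      rw [e3] at h5o
      rw [e2] at h6o
      -- numeric facts
      have hcs_pos : 1 ≤ c s := hk_pos s (by omega)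
      have hcs1_lt : c (s+1) < c s := by
        have := hcdec (s+1) (by omega) hs1k
        rwa [Nat.add_sub_cancel] at this
      have hmge_s1 : c s + 1 ≤ m (s+1) := by
        have := hm_ge (s+1) (by omega) hs1k
        rwa [Nat.add_sub_cancel] at this
      have hmle2_s1 : m (s+1) ≤ c (s-1) := by
        have h0 := hm_le2 (s+1) (by omega) hs1k
        have he : s + 1 - 2 = s - 1 := by omega
        rwa [he] at h0
      have hms_cs : c s + 2 ≤ m s := hmcs s hs1 hsk
      have hms_h : m s ≤ h := hm_le s
      have hms1_h : m (s+1) ≤ h := hm_le (s+1)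
      have hcsh : c s + 1 ≤ h := hcb s
      have hcs1h : c (s+1) + 1 ≤ h := hcb (s+1)
      have hMs2 : M (s+2) ≤ c s := by
        by_cases hsk2 : s + 2 ≤ k
        · rw [hM_eq _ hsk2]
          have h0 := hm_le2 (s+2) (by omega) hsk2
          have he : s + 2 - 2 = s := by omega
          rwa [he] at h0
        · rw [hM_eq' _ (by omega)]
          omega
      have hjunc2 : ∀ i, M (s+2) ≤ i → (i = M (s+2) ∨ i ≤ c (s+2)) → i = M (s+2) := by
        intro i hge hcase
        rcases hcase with he | hle
        · exact he
        by_cases hsk2 : s + 2 ≤ k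
        · exfalso
          have h0 := hm_ge (s+2) (by omega) hsk2
          have he2 : s + 2 - 1 = s + 1 := by omega
          rw [he2] at h0
          have h1 : c (s+2) < c (s+1) := by
            have := hcdec (s+2) (by omega) hsk2
            have he3 : s + 2 - 1 = s + 1 := by omega
            rwa [he3] at this
          rw [hM_eq _ hsk2] at hge
          omega
        · have h0 : c (s+2) = 0 := hc_after (s+2) (by omega)
          rw [hM_eq' _ (by omega)] at hge ⊢
          omega
      -- the pieces
      obtain ⟨ew, hewlen, hewpath, hewsupp⟩ := EarW s hs1 hsk
      obtain ⟨pw, hplen, hppath, hpsupp, hpedge⟩ := Pseg (c s) (M (s+2)) hMs2 (by omega)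
      -- ear support on/off the root path
      have hearP : ∀ j, j ≤ h → v j ∈ ew.support → j = c s ∨ j = m s := by
        intro j hj hjmem
        rcases hewsupp _ hjmem with he | ⟨ha1, ha2⟩
        · left; exact v_inj j (c s) hj (by omega) he
        · right
          have h1 := hm_max s hs1 hsk j hj ha1
          have h2 := nt.anc_dep (hmem _) ha2
          rw [dep_v (m s) hms_h, dep_v j hj] at h2
          omega
      have hearOff : ∀ y, y ∈ ew.support → (∀ j, j ≤ h → y ≠ v j) →
          nt.Anc (v (c (s-1) + 1)) y ∧ (2 ≤ s → ¬ nt.Anc (v (c (s-2) + 1)) y) := by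
        intro y hy hoff
        rcases hewsupp _ hy with he | ⟨ha1, ha2⟩
        · exact absurd he (hoff (c s) (by omega))
        constructor
        · rcases nt.anc_total (hmem (X s)) ha1 (hXanc s hs1 hsk) with h1 | h1
          · exfalso
            obtain ⟨i, hi, rfl⟩ := anc_of_v (c (s-1) + 1) (hcb (s-1)) y h1
            exact hoff i (by have := hcb (s-1); omega) rfl
          · exact h1
        · intro h2s hcon
          exact hXnotD s h2s hsk (nt.anc_trans hcon ha1)
      -- building the new chains
      set W1 : G.Walk (v (m s)) (v 0) := ew.append (pw.append W2o) with hW1def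
      set W2 : G.Walk (v (M (s+1))) (v 0) :=
        W1o.copy (congrArg v (hM_eq (s+1) hs1k).symm) rfl with hW2def
      have hW2supp : W2.support = W1o.support := by rw [hW2def, Walk.support_copy]
      -- membership helpers
      have hpwP : ∀ y, y ∈ pw.support → ∃ i, M (s+2) ≤ i ∧ i ≤ c s ∧ y = v i :=
        fun y hy => (hpsupp y).mp hy
      have hinner_path : (pw.append W2o).IsPath := by
        refine append_isPath hppath hP2o ?_
        intro y hy1 hy2
        obtain ⟨i, hge, hle, rfl⟩ := hpwP y hy1
        have := h4o i (by omega) hy2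
        rw [hjunc2 i hge this]
      have hW1path : W1.IsPath := by
        rw [hW1def]
        refine append_isPath hewpath hinner_path ?_
        intro y hy1 hy2
        rw [Walk.support_append] at hy2
        rcases List.mem_append.mp hy2 with hy2 | hy2
        · obtain ⟨i, hge, hle, rfl⟩ := hpwP y hy2
          rcases hearP i (by omega) hy1 with he | he
          · rw [he]
          · omega
        · have hy2' : y ∈ W2o.support := List.mem_of_mem_tail hy2
          by_cases hyP : ∃ j, j ≤ h ∧ y = v j
          · obtain ⟨j, hj, rfl⟩ := hyP
            rcases hearP j hj hy1 with he | he
            · subst he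
              have := h4o (c s) (by omega) hy2'
              have : c s = M (s+2) := hjunc2 _ (by omega) this
              rw [this]
            · subst he
              have hcase := h4o (m s) (by omega) hy2'
              exfalso
              rcases hcase with he2 | he2
              · omega
              · have : c (s+2) ≤ c s := by
                  by_cases hsk2 : s + 2 ≤ k
                  · have h1 : c (s+2) < c (s+1) := by
                      have := hcdec (s+2) (by omega) hsk2
                      have he3 : s + 2 - 1 = s + 1 := by omega
                      rwa [he3] at this
                    omega
                  · have := hc_after (s+2) (by omega)
                    omega
                omega
          · push_neg at hyP
            exfalso
            have hoff : ∀ j, j ≤ h → y ≠ v j := fun j hj => hyP j hj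
            have h1 := (hearOff y hy1 hoff).1
            have h2 := h6o y hy2' hoff
            refine h2 (nt.anc_trans ?_ h1)
            have hineq : c s + 1 ≤ c (s-1) + 1 := by
              have := hcdec s hs1 hsk
              omega
            exact anc_v (c s + 1) (c (s-1) + 1) hineq (hcb (s-1))
      have hms_ge : c (s-1) + 1 ≤ m s := hm_ge s hs1 hsk
      have hcs2_le : c (s+2) ≤ c s := by
        by_cases hsk2 : s + 2 ≤ k
        · have h1 : c (s+2) < c (s+1) := by
            have := hcdec (s+2) (by omega) hsk2
            have he3 : s + 2 - 1 = s + 1 := by omega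
            rwa [he3] at this
          omega
        · have := hc_after (s+2) (by omega)
          omega
      refine ⟨W1, W2, hW1path, ?_, ?_, ?_, ?_, ?_, ?_, ?_⟩
      · rw [hW2def, Walk.isPath_copy]
        exact hP1o
      · -- intersection
        intro y hy1 hy2
        rw [hW2supp] at hy2
        rw [hW1def, Walk.support_append] at hy1
        rcases List.mem_append.mp hy1 with hy1 | hy1
        · by_cases hyP : ∃ j, j ≤ h ∧ y = v j
          · obtain ⟨j, hj, rfl⟩ := hyP
            exfalso
            rcases hearP j hj hy1 with he | he
            · subst he
              have hcase := h3o (c s) (by omega) hy2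
              omega
            · subst he
              have hcase := h3o (m s) (by omega) hy2
              omega
          · push_neg at hyP
            exfalso
            have hoff : ∀ j, j ≤ h → y ≠ v j := fun j hj => hyP j hj
            have h1 := (hearOff y hy1 hoff).1
            have h2 := h5o (by omega) y hy2 hoff
            exact absurd h1 h2
        · have hy1' : y ∈ (pw.append W2o).support := List.mem_of_mem_tail hy1
          rw [Walk.support_append] at hy1'
          rcases List.mem_append.mp hy1' with hy1' | hy1'
          · obtain ⟨i, hge, hle, rfl⟩ := hpwP y hy1'
            have hcase := h3o i (by omega) hy2
            rcases hcase with he | he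
            · omega
            · by_cases hsk2 : s + 2 ≤ k
              · exfalso
                have h0 := hm_ge (s+2) (by omega) hsk2
                have he2 : s + 2 - 1 = s + 1 := by omega
                rw [he2] at h0
                rw [hM_eq _ hsk2] at hge
                omega
              · have hz1 : c (s+1) = 0 := hc_after (s+1) (by omega)
                have hi0 : i = 0 := by omega
                rw [hi0]
          · have hy'' : y ∈ W2o.support := List.mem_of_mem_tail hy1'
            exact hIo y hy2 hy''
      · -- positions of W1
        intro j hj hjmem
        rw [hW1def, Walk.support_append] at hjmem
        rcases List.mem_append.mp hjmem with hy | hy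
        · rcases hearP j hj hy with he | he
          · right; omega
          · left; exact he
        · have hy' : v j ∈ (pw.append W2o).support := List.mem_of_mem_tail hy
          rw [Walk.support_append] at hy'
          rcases List.mem_append.mp hy' with hy' | hy'
          · obtain ⟨i, hge, hle, heq⟩ := (hpsupp _).mp hy'
            have : j = i := v_inj j i hj (by omega) heq
            right; omega
          · have hy'' : v j ∈ W2o.support := List.mem_of_mem_tail hy'
            have hcase := h4o j hj hy''
            right
            rcases hcase with he | he
            · omega
            · omega
      · -- positions of W2
        intro j hj hjmem
        rw [hW2supp] at hjmem
        have := h3o j hj hjmem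
        rwa [hM_eq (s+1) hs1k]
      · -- off-path part of W1
        intro h2s y hy hoff
        rw [hW1def, Walk.support_append] at hy
        rcases List.mem_append.mp hy with hy | hy
        · exact (hearOff y hy hoff).2 h2s
        · have hy' : y ∈ (pw.append W2o).support := List.mem_of_mem_tail hy
          rw [Walk.support_append] at hy'
          rcases List.mem_append.mp hy' with hy' | hy'
          · obtain ⟨i, hge2, hle2, rfl⟩ := hpwP y hy'
            exact absurd rfl (hoff i (by omega))
          · have hy'' : y ∈ W2o.support := List.mem_of_mem_tail hy'
            have h2 := h6o y hy'' hoff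
            intro hcon
            refine h2 (nt.anc_trans ?_ hcon)
            have hineq2 : c s + 1 ≤ c (s-2) + 1 := by
              have d1 := hcdec s hs1 hsk
              have d2 := hcdec (s-1) (by omega) (by omega)
              have e4 : s - 1 - 1 = s - 2 := by omega
              rw [e4] at d2
              omega
            exact anc_v _ _ hineq2 (hcb (s-2))
      · -- off-path part of W2
        intro y hy hoff
        rw [hW2supp] at hy
        exact h5o (by omega) y hy hoff
      · -- lengths
        rw [hW1def, hW2def, Walk.length_copy, Walk.length_append, Walk.length_append,
          hewlen, hplen]
        rw [sum_Icc_bot hsk alen, sum_Icc_bot (show s ≤ k - 1 by omega)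
          (fun j => c j - M (j+2))]
        omega
  -- assemble the big cycle
  obtain ⟨W1, W2, hp1, hp2, hI, h3, h4, h5, h6, h7⟩ := CL (k-1) 1 (by omega) le_rfl
  replace h4 : ∀ j, j ≤ h → v j ∈ W2.support → j = M 2 ∨ j ≤ c 2 := by
    intro j hj hjm
    have := h4 j hj hjm
    rwa [show (1:ℕ)+1 = 2 from rfl] at this
  replace h6 : ∀ y, y ∈ W2.support → (∀ j, j ≤ h → y ≠ v j) → ¬ nt.Anc (v (c 0 + 1)) y := by
    intro y hy hoff
    have := h6 y hy hoff
    rwa [show (1:ℕ)-1 = 0 from rfl] at this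
  have hc1lt : c 1 < h - 1 := by
    have := hcdec 1 le_rfl hk1
    simp only [show (1:ℕ)-1 = 0 from rfl] at this
    omega
  have hc2h : c 2 + 1 ≤ h := hcb 2
  have hc2c1 : c 2 ≤ c 1 := by
    by_cases hk2 : 2 ≤ k
    · have := hcdec 2 (by omega) hk2
      simp only [show (2:ℕ)-1 = 1 from rfl] at this
      omega
    · have := hc_after 2 (by omega)
      omega
  have hM2le : M 2 ≤ h - 1 := by
    by_cases hk2 : 2 ≤ k
    · rw [hM_eq 2 hk2]
      have := hm_le2 2 le_rfl hk2
      simp only [show (2:ℕ)-2 = 0 from rfl] at this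
      omega
    · rw [hM_eq' 2 (by omega)]
      omega
  have hM2c1 : c 1 < M 2 ∨ (M 2 = 0 ∧ c 1 = 0) := by
    by_cases hk2 : 2 ≤ k
    · left
      rw [hM_eq 2 hk2]
      have := hm_ge 2 (by omega) hk2
      simp only [show (2:ℕ)-1 = 1 from rfl] at this
      omega
    · right
      exact ⟨hM_eq' 2 (by omega), hc_after 1 (by omega)⟩
  have hM2c2 : c 2 < M 2 ∨ (M 2 = 0 ∧ c 2 = 0) := by
    rcases hM2c1 with h' | h'
    · left; omega
    · right; exact ⟨h'.1, by omega⟩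
  have etop : G.Adj (v h) (v (h-1)) := by
    have := v_adj (h-1) (by omega)
    have he : h - 1 + 1 = h := by omega
    rwa [he] at this
  obtain ⟨pw, hplen, hppath, hpsupp, hpedge⟩ := Pseg (h-1) (M 2) (by omega) (by omega)
  set W1' : G.Walk (v h) (v 0) := W1.copy (congrArg v hm1) rfl with hW1'def
  have hW1'supp : W1'.support = W1.support := by rw [hW1'def, Walk.support_copy]
  have hsupW1 : ∀ j, j ≤ h → v j ∈ W1.support → j = h ∨ j ≤ c 1 := by
    intro j hj hjm
    have := h3 j hj hjm
    rwa [hm1] at this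
  set REST : G.Walk (v (h-1)) (v h) := pw.append (W2.append W1'.reverse) with hRdef2
  have hRESTpath : REST.IsPath := by
    rw [hRdef2]
    have hinner2 : (W2.append W1'.reverse).IsPath := by
      refine append_isPath hp2 ?_ ?_
      · rw [hW1'def]
        exact ((Walk.isPath_copy _ _ _).mpr hp1).reverse
      · intro y hy1 hy2
        rw [Walk.support_reverse, List.mem_reverse, hW1'supp] at hy2
        exact hI y hy2 hy1
    refine append_isPath hppath hinner2 ?_
    intro y hy1 hy2
    obtain ⟨i, hge, hle, rfl⟩ := (hpsupp y).mp hy1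
    rw [Walk.support_append] at hy2
    rcases List.mem_append.mp hy2 with hy2 | hy2
    · rcases h4 i (by omega) hy2 with he | he
      · rw [he]
      · rcases hM2c2 with h' | h'
        · omega
        · have : i = 0 := by omega
          rw [this, h'.1]
    · have hy2' : v i ∈ W1'.reverse.support := List.mem_of_mem_tail hy2
      rw [Walk.support_reverse, List.mem_reverse, hW1'supp] at hy2'
      rcases hsupW1 i (by omega) hy2' with he | he
      · omega
      · rcases hM2c1 with h' | h'
        · omega
        · have : i = 0 := by omega
          rw [this, h'.1]
  have hnot : s(v h, v (h-1)) ∉ REST.edges := by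
    rw [hRdef2, Walk.edges_append, Walk.edges_append]
    intro hmem'
    rcases List.mem_append.mp hmem' with he | he
    · obtain ⟨i, hge, hlt, heq⟩ := hpedge _ he
      rcases Sym2.eq_iff.mp heq with ⟨ha, hb⟩ | ⟨ha, hb⟩
      · have := v_inj h (i+1) le_rfl (by omega) ha
        omega
      · have := v_inj h i le_rfl (by omega) ha
        omega
    rcases List.mem_append.mp he with he | he
    · have hvh : v h ∈ W2.support := Walk.fst_mem_support_of_mem_edges _ he
      have hcase := h4 h le_rfl hvh
      omega
    · rw [Walk.edges_reverse, List.mem_reverse] at he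
      have hvh1 : v (h-1) ∈ W1'.support := Walk.snd_mem_support_of_mem_edges _ he
      rw [hW1'supp] at hvh1
      have hcase := hsupW1 (h-1) (by omega) hvh1
      omega
  have hcyc : (Walk.cons etop REST).IsCycle :=
    (Walk.cons_isCycle_iff REST etop).mpr ⟨hRESTpath, hnot⟩
  have hlent := cyc_le hc _ hcyc
  have hlencalc : (Walk.cons etop REST).length = 1 + (h - 1 - M 2) + (W2.length + W1.length) := by
    rw [Walk.length_cons, hRdef2, Walk.length_append, Walk.length_append,
      Walk.length_reverse, hW1'def, Walk.length_copy, hplen]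
    omega
  have hB : (∑ j ∈ Finset.Icc 1 k, alen j) +
      (∑ j ∈ Finset.Icc 1 (k-1), (c j - M (j+2))) + (h - M 2) ≤ t := by
    rw [hlencalc] at hlent
    omega
  -- final arithmetic
  set SA : ℤ := ∑ j ∈ Finset.Icc 1 k, (alen j : ℤ) with hSAdef
  set Sm : ℤ := ∑ j ∈ Finset.Icc 1 k, (m j : ℤ) with hSmdef
  set Sc : ℤ := ∑ j ∈ Finset.Icc 1 k, (c j : ℤ) with hScdef
  have cardIcc : (Finset.Icc 1 k).card = k := by
    rw [Nat.card_Icc]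
    omega
  have hAZ : SA + (Sm - Sc) ≤ (k : ℤ) * t := by
    have h1 : ∀ j ∈ Finset.Icc 1 k, (alen j : ℤ) + ((m j : ℤ) - (c j : ℤ)) ≤ (t : ℤ) := by
      intro j hj
      rw [Finset.mem_Icc] at hj
      have ha := hA j hj.1 hj.2
      have hb := hmcs j hj.1 hj.2
      have hd := hXdep j hj.1 hj.2
      rw [halen_eq] at ha ⊢
      omega
    have h2 := Finset.sum_le_sum h1
    rw [Finset.sum_add_distrib, Finset.sum_sub_distrib, Finset.sum_const, cardIcc,
      nsmul_eq_mul] at h2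
    rw [hSAdef, hSmdef, hScdef]
    exact h2
  have hSAk : (k : ℤ) ≤ SA := by
    have h1 : ∀ j ∈ Finset.Icc 1 k, (1 : ℤ) ≤ (alen j : ℤ) := by
      intro j hj
      have : 1 ≤ alen j := by rw [halen_eq]; omega
      exact_mod_cast this
    have h2 := Finset.sum_le_sum h1
    rw [Finset.sum_const, cardIcc, nsmul_eq_mul, mul_one] at h2
    rw [hSAdef]
    exact h2
  have hMle : ∀ j, 1 ≤ j → j ≤ k - 1 → M (j+2) ≤ c j := by
    intro j hj1 hj2
    by_cases hjk : j + 2 ≤ k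
    · rw [hM_eq _ hjk]
      have h0 := hm_le2 (j+2) (by omega) hjk
      have he : j + 2 - 2 = j := by omega
      rwa [he] at h0
    · rw [hM_eq' _ (by omega)]
      omega
  have hScS : Sc = ∑ j ∈ Finset.Icc 1 (k-1), (c j : ℤ) := by
    have hk' : k = (k-1) + 1 := by omega
    rw [hScdef, hk', Finset.sum_Icc_succ_top (by omega), ← hk', hk_zero]
    simp
  have hshift : ∑ j ∈ Finset.Icc 1 (k-1), (M (j+2) : ℤ) = Sm - (h : ℤ) - (M 2 : ℤ) := by
    by_cases hk2 : 2 ≤ k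
    · have e1 : ∑ j ∈ Finset.Icc 1 (k-1), (M (j+2) : ℤ)
          = ∑ j ∈ Finset.Icc 3 (k+1), (M j : ℤ) := by
        rw [show (3:ℕ) = 1 + 2 from rfl, show k + 1 = (k - 1) + 2 from by omega,
          sum_Icc_shift]
      have e2 : ∑ j ∈ Finset.Icc 3 (k+1), (M j : ℤ)
          = (∑ j ∈ Finset.Icc 3 k, (M j : ℤ)) + (M (k+1) : ℤ) := by
        rw [show k + 1 = k + 1 from rfl]
        exact Finset.sum_Icc_succ_top (by omega) _
      have e3 : (M (k+1) : ℤ) = 0 := by rw [hM_eq' (k+1) (by omega)]; simp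
      have e4 : ∑ j ∈ Finset.Icc 3 k, (M j : ℤ) = ∑ j ∈ Finset.Icc 3 k, (m j : ℤ) := by
        refine Finset.sum_congr rfl ?_
        intro j hj
        rw [Finset.mem_Icc] at hj
        rw [hM_eq j hj.2]
      have e5 : Sm = (m 1 : ℤ) + ((m 2 : ℤ) + ∑ j ∈ Finset.Icc 3 k, (m j : ℤ)) := by
        rw [hSmdef, sum_Icc_bot hk1 (fun j => (m j : ℤ)),
          sum_Icc_bot hk2 (fun j => (m j : ℤ))]
      rw [e1, e2, e3, e4, e5, hm1, hM_eq 2 hk2]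
      push_cast
      ring
    · have hk1' : k = 1 := by omega
      have e0 : (Finset.Icc 1 (k-1)) = ∅ := by
        rw [hk1']
        exact Finset.Icc_eq_empty (by omega)
      rw [e0, Finset.sum_empty]
      have e1 : Sm = (m 1 : ℤ) := by
        rw [hSmdef, hk1', Finset.Icc_self, Finset.sum_singleton]
      have e2 : (M 2 : ℤ) = 0 := by rw [hM_eq' 2 (by omega)]; simp
      rw [e1, e2, hm1]
      ring
  have hBZ : SA + Sc - Sm + 2 * (h : ℤ) ≤ (t : ℤ) := by
    have hsplit : (∑ j ∈ Finset.Icc 1 (k-1), ((c j - M (j+2) : ℕ) : ℤ))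
        = (∑ j ∈ Finset.Icc 1 (k-1), (c j : ℤ))
          - ∑ j ∈ Finset.Icc 1 (k-1), (M (j+2) : ℤ) := by
      rw [← Finset.sum_sub_distrib]
      refine Finset.sum_congr rfl ?_
      intro j hj
      rw [Finset.mem_Icc] at hj
      have := hMle j hj.1 hj.2
      exact Nat.cast_sub this
    have hcast : (((∑ j ∈ Finset.Icc 1 k, alen j) : ℕ) : ℤ)
        + (((∑ j ∈ Finset.Icc 1 (k-1), (c j - M (j+2))) : ℕ) : ℤ)
        + ((h - M 2 : ℕ) : ℤ) ≤ (t : ℤ) := by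
      exact_mod_cast hB
    rw [Nat.cast_sum, Nat.cast_sum, hsplit, Nat.cast_sub (by omega)] at hcast
    rw [← hSAdef] at hcast
    rw [hshift, ← hScS] at hcast
    omega
  have hSmup : Sm - Sc ≤ 2 * (h : ℤ) - 2 := by
    by_cases hk2 : 2 ≤ k
    · have e5 : Sm = (m 1 : ℤ) + ∑ j ∈ Finset.Icc 2 k, (m j : ℤ) := by
        rw [hSmdef, sum_Icc_bot hk1 (fun j => (m j : ℤ))]
      have h1 : ∑ j ∈ Finset.Icc 2 k, (m j : ℤ) ≤ ∑ j ∈ Finset.Icc 2 k, (c (j-2) : ℤ) := by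
        refine Finset.sum_le_sum ?_
        intro j hj
        rw [Finset.mem_Icc] at hj
        have := hm_le2 j hj.1 hj.2
        exact_mod_cast this
      have h2 : ∑ j ∈ Finset.Icc 2 k, (c (j-2) : ℤ) = ∑ j ∈ Finset.Icc 0 (k-2), (c j : ℤ) := by
        have hs := sum_Icc_shift (fun j => (c (j-2) : ℤ)) 0 (k-2) 2
        simp only [Nat.zero_add] at hs
        rw [show (k-2) + 2 = k from by omega] at hs
        rw [hs]
        refine Finset.sum_congr rfl ?_
        intro j hj
        simp only [Nat.add_sub_cancel]
      have h3 : ∑ j ∈ Finset.Icc 0 (k-2), (c j : ℤ)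
          = (c 0 : ℤ) + ∑ j ∈ Finset.Icc 1 (k-2), (c j : ℤ) := by
        rw [sum_Icc_bot (by omega) (fun j => (c j : ℤ))]
      have h4 : ∑ j ∈ Finset.Icc 1 (k-1), (c j : ℤ)
          = (∑ j ∈ Finset.Icc 1 (k-2), (c j : ℤ)) + (c (k-1) : ℤ) := by
        rw [show k - 1 = (k-2) + 1 from by omega]
        exact Finset.sum_Icc_succ_top (by omega) _
      have h5 : (1 : ℤ) ≤ (c (k-1) : ℤ) := by
        have := hk_pos (k-1) (by omega)
        exact_mod_cast this
      have h6 : (c 0 : ℤ) = (h : ℤ) - 1 := by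
        rw [hc0]
        push_cast
        omega
      rw [hScS, h4, e5, hm1]
      rw [h2] at h1
      omega
    · have hk1' : k = 1 := by omega
      have e1 : Sm = (h : ℤ) := by
        rw [hSmdef, hk1', Finset.Icc_self, Finset.sum_singleton, hm1]
      have e2 : Sc = 0 := by
        rw [hScdef, hk1', Finset.Icc_self, Finset.sum_singleton]
        rw [show c 1 = 0 from by rw [← hk1']; exact hk_zero]
        simp
      rw [e1, e2]
      push_cast
      omega
  -- conclude
  have hksmall : (k : ℤ) ≤ (t : ℤ) - 2 := by
    have := hBZ
    have := hSmup
    have := hSAk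
    omega
  have hfin : 2 * (h : ℤ) ≤ ((k : ℤ) + 1) * t - 2 * k := by
    have := hAZ
    have := hBZ
    have := hSAk
    nlinarith [hSAk, hAZ, hBZ]
  have htZ : (3 : ℤ) ≤ (t : ℤ) := by exact_mod_cast ht3
  have hfin2 : 2 * (h : ℤ) + 3 * t ≤ (t : ℤ) * t + 4 := by
    nlinarith [hksmall, hfin, htZ, hSAk]
  have hend : 2 * h + 3 * t ≤ t * t + 4 := by exact_mod_cast hfin2
  rw [hhdef] at hend
  exact ⟨ht3, hend⟩

end PWaux


namespace PWaux

variable {V : Type} [Fintype V]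
set_option linter.unusedSectionVars false
set_option linter.unusedVariables false
set_option maxHeartbeats 1000000

lemma final_arith {t d : ℕ} (ht : 3 ≤ t) (hb : 2 * d + 3 * t ≤ t * t + 4) :
    d ≤ t / 2 * (t - 1) := by
  rcases Nat.even_or_odd t with he | ho
  · obtain ⟨mm, rfl⟩ := he
    have h2 : (mm + mm) / 2 = mm := by omega
    rw [h2]
    have hmm : 2 ≤ mm := by omega
    obtain ⟨q, hq⟩ : ∃ q, q + 1 = mm + mm := ⟨mm + mm - 1, by omega⟩
    have hq' : mm + mm - 1 = q := by omega
    rw [hq']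
    have h4 : 2 * d ≤ 2 * (mm * q) := by nlinarith
    omega
  · obtain ⟨mm, rfl⟩ := ho
    have h2 : (2 * mm + 1) / 2 = mm := by omega
    rw [h2]
    have hmm : 1 ≤ mm := by omega
    have h3 : 2 * mm + 1 - 1 = 2 * mm := by omega
    rw [h3]
    have h4 : 2 * d ≤ 2 * (mm * (2 * mm)) := by nlinarith
    omega

lemma deep_or_contra {G : SimpleGraph V} {r : V} (nt : NTOn G Finset.univ r)
    (hK : KConn G 2) : ∃ z, 2 ≤ nt.dep z := by
  classical
  have hmem : ∀ x : V, x ∈ (Finset.univ : Finset V) := fun x => Finset.mem_univ x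
  by_contra hno
  push_neg at hno
  have h3 : 2 < Nat.card V := hK.1
  have hcard : 3 ≤ Fintype.card V := by rwa [Nat.card_eq_fintype_card] at h3
  have hcard2 : 2 ≤ ((Finset.univ : Finset V).erase r).card := by
    rw [Finset.card_erase_of_mem (hmem r), Finset.card_univ]
    omega
  obtain ⟨x, hx, y, hy, hxy⟩ := Finset.one_lt_card.mp (by omega : 1 < ((Finset.univ : Finset V).erase r).card)
  rw [Finset.mem_erase] at hx hy
  have hconn := hK.2 {r} (Set.finite_singleton _) (by simp)
  have hre := hconn.preconnected ⟨x, by simp [hx.1]⟩ ⟨y, by simp [hy.1]⟩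
  have hri : ReachIn G ({r} : Set V)ᶜ x y := reachIn_of_induce hre
  obtain ⟨w, hw⟩ := hri
  -- first edge of this walk: both endpoints differ from r
  obtain ⟨a, b, ha, hb, hadj⟩ : ∃ a b : V, a ≠ r ∧ b ≠ r ∧ G.Adj a b := by
    cases w with
    | nil => exact absurd rfl hxy
    | @cons _ c _ hadj p =>
      refine ⟨x, c, hx.1, ?_, hadj⟩
      have := hw c (by simp)
      simpa using this
  have hab : a ≠ b := hadj.ne
  rcases nt.normal a (hmem a) b (hmem b) hadj with hanc | hanc
  · -- a ancestor of b
    have h1 := nt.anc_dep_lt (hmem b) hanc hab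
    have h2 := nt.dep_pos (hmem a) ha
    have h3 := hno b
    omega
  · have h1 := nt.anc_dep_lt (hmem a) hanc hab.symm
    have h2 := nt.dep_pos (hmem b) hb
    have h3 := hno a
    omega

lemma pw_of_NT {G : SimpleGraph V} {r : V} (nt : NTOn G Finset.univ r) (w : ℕ)
    (hdep : ∀ x, nt.dep x ≤ w) : pwLE G w := by
  classical
  have hmem : ∀ x : V, x ∈ (Finset.univ : Finset V) := fun x => Finset.mem_univ x
  have hnum_lt : ∀ x : V, nt.num x < Fintype.card V := by
    intro x
    have := nt.num_lt x (hmem x)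
    rwa [Finset.card_univ] at this
  have hcardV : 1 ≤ Fintype.card V := by
    have := Finset.card_pos.mpr ⟨r, hmem r⟩
    rw [Finset.card_univ] at this; exact this
  set F : V → Fin (Fintype.card V) := fun x => ⟨nt.num x, hnum_lt x⟩ with hF
  have hFinj : Function.Injective F := by
    intro a b hab
    have : nt.num a = nt.num b := by simpa [hF] using congrArg Fin.val hab
    exact nt.num_inj a (hmem a) b (hmem b) this
  have hFsurj : Function.Surjective F :=
    ((Fintype.bijective_iff_injective_and_card F).mpr ⟨hFinj, by simp⟩).2
  have hvert : ∀ i : Fin (Fintype.card V), ∃ x, nt.num x = i.val := by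
    intro i
    obtain ⟨x, hx⟩ := hFsurj i
    exact ⟨x, by simpa [hF] using congrArg Fin.val hx⟩
  choose vert hvert2 using hvert
  have hvert3 : ∀ x : V, vert ⟨nt.num x, hnum_lt x⟩ = x := by
    intro x
    exact nt.num_inj _ (hmem _) x (hmem x) (hvert2 ⟨nt.num x, hnum_lt x⟩)
  set ι : Fin (Fintype.card V - 1 + 1) → Fin (Fintype.card V) :=
    fun i => ⟨i.val, by omega⟩ with hι
  refine ⟨⟨Fintype.card V - 1,
    fun i => Finset.univ.filter (fun y => nt.Anc y (vert (ι i))), ?_, ?_, ?_⟩, ?_⟩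
  · -- edges
    intro a b hadj
    have key : ∀ u v' : V, nt.Anc u v' → ∃ i, u ∈ Finset.univ.filter
        (fun y => nt.Anc y (vert (ι i))) ∧ v' ∈ Finset.univ.filter
        (fun y => nt.Anc y (vert (ι i))) := by
      intro u v' hanc
      refine ⟨⟨nt.num v', by have := hnum_lt v'; omega⟩, ?_, ?_⟩
      · rw [Finset.mem_filter]
        refine ⟨hmem u, ?_⟩
        have he : vert (ι ⟨nt.num v', by have := hnum_lt v'; omega⟩) = v' := by
          have : (ι ⟨nt.num v', by have := hnum_lt v'; omega⟩) = ⟨nt.num v', hnum_lt v'⟩ := by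
            simp [hι]
          rw [this, hvert3]
        rw [he]
        exact hanc
      · rw [Finset.mem_filter]
        refine ⟨hmem v', ?_⟩
        have he : vert (ι ⟨nt.num v', by have := hnum_lt v'; omega⟩) = v' := by
          have : (ι ⟨nt.num v', by have := hnum_lt v'; omega⟩) = ⟨nt.num v', hnum_lt v'⟩ := by
            simp [hι]
          rw [this, hvert3]
        rw [he]
        exact nt.anc_refl v'
    rcases nt.normal a (hmem a) b (hmem b) hadj with hanc | hanc
    · exact key a b hanc
    · obtain ⟨i, h1, h2⟩ := key b a hanc
      exact ⟨i, h2, h1⟩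
  · -- vertices
    intro x
    refine ⟨⟨nt.num x, by have := hnum_lt x; omega⟩, ?_⟩
    rw [Finset.mem_filter]
    refine ⟨hmem x, ?_⟩
    have he : (ι ⟨nt.num x, by have := hnum_lt x; omega⟩) = ⟨nt.num x, hnum_lt x⟩ := by
      simp [hι]
    rw [he, hvert3]
    exact nt.anc_refl x
  · -- interval property
    intro x i j kk hij hjk hxi hxk
    rw [Finset.mem_filter] at hxi hxk ⊢
    refine ⟨hmem x, ?_⟩
    refine nt.num_int x (hmem x) (vert (ι i)) (hmem _) (vert (ι kk)) (hmem _)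
      (vert (ι j)) (hmem _) hxi.2 hxk.2 ?_ ?_
    · rw [hvert2, hvert2]
      exact hij
    · rw [hvert2, hvert2]
      exact hjk
  · -- width
    intro i
    set y0 := vert (ι i) with hy0
    have hsub : Finset.univ.filter (fun y => nt.Anc y y0) ⊆
        (Finset.range (nt.dep y0 + 1)).image (fun n => nt.par^[n] y0) := by
      intro x hx
      rw [Finset.mem_filter] at hx
      obtain ⟨n, hn, he⟩ := nt.anc_norm (hmem y0) hx.2
      rw [Finset.mem_image]
      exact ⟨n, Finset.mem_range.mpr (by omega), he⟩
    calc (Finset.univ.filter (fun y => nt.Anc y y0)).card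
        ≤ ((Finset.range (nt.dep y0 + 1)).image (fun n => nt.par^[n] y0)).card :=
          Finset.card_le_card hsub
      _ ≤ (Finset.range (nt.dep y0 + 1)).card := Finset.card_image_le
      _ = nt.dep y0 + 1 := Finset.card_range _
      _ ≤ w + 1 := by have := hdep y0; omega

end PWaux

theorem stmt0' {V : Type} [Fintype V] (G : SimpleGraph V) (t : ℕ)
    (h2 : KConn G 2) (hc : CircumEq G t) :
    pwLE G (t / 2 * (t - 1)) := by
  classical
  open PWaux in
  have hV3 : 2 < Nat.card V := h2.1
  have hcard : 3 ≤ Fintype.card V := by rwa [Nat.card_eq_fintype_card] at hV3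
  have hne : Nonempty V := Fintype.card_pos_iff.mp (show 0 < Fintype.card V by omega)
  obtain ⟨r⟩ := hne
  have hconn : (G.induce (Set.univ : Set V)).Connected := by
    have := h2.2 ∅ Set.finite_empty (by simp)
    rwa [Set.compl_empty] at this
  have hpairs : ∀ x ∈ (Finset.univ : Finset V), ∀ y ∈ (Finset.univ : Finset V),
      PWaux.ReachIn G ↑(Finset.univ : Finset V) x y := by
    intro x _ y _
    have hre : (G.induce (Set.univ : Set V)).Reachable ⟨x, trivial⟩ ⟨y, trivial⟩ :=
      hconn.preconnected _ _
    have := PWaux.reachIn_of_induce hre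
    simpa [Finset.coe_univ] using this
  obtain ⟨nt⟩ := PWaux.exists_NTOn G (Fintype.card V) Finset.univ r
    (le_of_eq Finset.card_univ) (Finset.mem_univ r) hpairs
  obtain ⟨z0, hz0⟩ := PWaux.deep_or_contra nt h2
  obtain ⟨ht3, _⟩ := PWaux.depth_bound nt h2 hc z0 hz0
  apply PWaux.pw_of_NT nt
  intro x
  by_cases hx2 : 2 ≤ nt.dep x
  · obtain ⟨_, hb⟩ := PWaux.depth_bound nt h2 hc x hx2
    exact PWaux.final_arith ht3 hb
  · have hge : 2 ≤ t / 2 * (t - 1) := by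
      have h1 : 1 ≤ t / 2 := by omega
      have h2' : 2 ≤ t - 1 := by omega
      calc 2 = 1 * 2 := by ring
        _ ≤ t / 2 * (t - 1) := Nat.mul_le_mul h1 h2'
    omega


/-- Every 2-connected graph with circumference `t` has pathwidth
at most `⌊t/2⌋ * (t - 1)`. -/
theorem stmt0 {V : Type} [Fintype V] (G : SimpleGraph V) (t : ℕ)
    (h2 : KConn G 2) (hc : CircumEq G t) :
    pwLE G (t / 2 * (t - 1)) := stmt0' G t h2 hc
end

section
/- The complete binary tree of height h has pathwidth exactly ⌈h/2⌉. -/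
open SimpleGraph

universe u v

section Defs

variable {V : Type u} {W : Type v}

section Infra

open List Function

namespace CBTP

/-- Every list is empty, a singleton, or ends with two elements. -/
lemma list_cases2 (L : List Bool) : L = [] ∨ (∃ b, L = [b]) ∨ ∃ l b c, L = l ++ [b, c] := by
  induction L with
  | nil => exact Or.inl rfl
  | cons x t ih =>
    rcases ih with rfl | ⟨b, rfl⟩ | ⟨l, b, c, rfl⟩
    · exact Or.inr (Or.inl ⟨x, rfl⟩)
    · exact Or.inr (Or.inr ⟨[], x, b, rfl⟩)
    · exact Or.inr (Or.inr ⟨x :: l, b, c, rfl⟩)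

/-- Embedding of `CBT h` into `CBT (h+2)` as the subtree of strings with suffix `s`. -/
def emb (h : ℕ) (s : List Bool) (hs : s.length = 2) (v : CBTVert h) : CBTVert (h + 2) :=
  ⟨v.val ++ s, by have := v.2; simp only [List.length_append, hs]; omega⟩

lemma emb_inj {h : ℕ} {s : List Bool} {hs : s.length = 2} :
    Function.Injective (emb h s hs) := by
  intro u v huv
  apply Subtype.ext
  have : u.val ++ s = v.val ++ s := congrArg Subtype.val huv
  exact (List.append_inj' this rfl).1

lemma emb_adj {h : ℕ} {s : List Bool} {hs : s.length = 2} {u v : CBTVert h}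
    (huv : (CBT h).Adj u v) : (CBT (h + 2)).Adj (emb h s hs u) (emb h s hs v) := by
  rcases huv with ⟨b, hb⟩ | ⟨b, hb⟩
  · exact Or.inl ⟨b, by simp [emb, hb]⟩
  · exact Or.inr ⟨b, by simp [emb, hb]⟩

/-- Restriction of a path decomposition along an injective graph homomorphism. -/
noncomputable def _root_.PathDecomp.restrict {V : Type u} {W : Type v}
    {H : SimpleGraph W} (D : PathDecomp H) (G : SimpleGraph V) (f : V → W)
    (hinj : Function.Injective f)
    (hadj : ∀ ⦃a b⦄, G.Adj a b → H.Adj (f a) (f b)) : PathDecomp G where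
  n := D.n
  bag i := (D.bag i).preimage f hinj.injOn
  cov_edge := by
    intro a b hab
    obtain ⟨i, h1, h2⟩ := D.cov_edge (hadj hab)
    exact ⟨i, Finset.mem_preimage.2 h1, Finset.mem_preimage.2 h2⟩
  cov_vert := by
    intro a
    obtain ⟨i, h1⟩ := D.cov_vert (f a)
    exact ⟨i, Finset.mem_preimage.2 h1⟩
  interval := by
    intro x i j k hij hjk hi hk
    exact Finset.mem_preimage.2
      (D.interval (f x) i j k hij hjk (Finset.mem_preimage.1 hi) (Finset.mem_preimage.1 hk))

/-- Crossing lemma: a walk from a vertex in bag `i` to a vertex in bag `k` meets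
every bag in between. -/
lemma cross {V : Type u} {G : SimpleGraph V} (D : PathDecomp G) :
    ∀ {x y : V} (p : G.Walk x y) {i j k : Fin (D.n + 1)}, i ≤ j → j ≤ k →
    x ∈ D.bag i → y ∈ D.bag k → ∃ z ∈ D.bag j, z ∈ p.support := by
  intro x y p
  induction p with
  | nil =>
    intro i j k hij hjk hx hy
    exact ⟨_, D.interval _ i j k hij hjk hx hy, by simp⟩
  | @cons a b c hab p ih =>
    intro i j k hij hjk hx hy
    obtain ⟨i', h1, h2⟩ := D.cov_edge hab
    rcases le_or_gt j i' with hle | hlt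
    · exact ⟨a, D.interval a i j i' hij hle hx h1, by simp⟩
    · obtain ⟨z, hz, hz2⟩ := ih hlt.le hjk h2 hy
      exact ⟨z, hz, by simp [hz2]⟩

end CBTP
end Infra
section Walks
namespace CBTP

lemma len2 {L : List Bool} (hL : L.length = 2) : ∃ a b, L = [a, b] := by
  rcases L with _ | ⟨a, _ | ⟨b, _ | ⟨c, t⟩⟩⟩ <;> simp_all

/-- Walk from any vertex of a copy to the copy root, staying inside the copy. -/
lemma walk_to_copy_root {n : ℕ} (s : List Bool) :
    ∀ (l : List Bool) (hl : (l ++ s).length ≤ n) (hs : s.length ≤ n),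
    ∃ p : (CBT n).Walk ⟨l ++ s, hl⟩ ⟨s, hs⟩, ∀ z ∈ p.support, ∃ l', z.val = l' ++ s := by
  intro l
  induction l with
  | nil =>
    intro hl hs
    exact ⟨SimpleGraph.Walk.nil, by simp⟩
  | cons b l ih =>
    intro hl hs
    have hl' : (l ++ s).length ≤ n := by simp at hl ⊢; omega
    obtain ⟨p, hp⟩ := ih hl' hs
    have hadj : (CBT n).Adj ⟨(b :: l) ++ s, hl⟩ ⟨l ++ s, hl'⟩ := Or.inl ⟨b, rfl⟩
    refine ⟨SimpleGraph.Walk.cons hadj p, ?_⟩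
    intro z hz
    rw [SimpleGraph.Walk.support_cons, List.mem_cons] at hz
    rcases hz with rfl | hz
    · exact ⟨b :: l, rfl⟩
    · exact hp z hz

/-- Walk between vertices of two (length-2-suffix) copies whose support avoids
anything of length ≥ 2 outside the two copies. -/
lemma walk_between {h : ℕ} {sa sc : List Bool} (ha : sa.length = 2) (hc : sc.length = 2)
    (x y : CBTVert (h + 2)) (hx : ∃ l, x.val = l ++ sa) (hy : ∃ l, y.val = l ++ sc) :
    ∃ p : (CBT (h + 2)).Walk x y, ∀ z ∈ p.support,
      z.val.length ≤ 1 ∨ (∃ l, z.val = l ++ sa) ∨ ∃ l, z.val = l ++ sc := by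
  obtain ⟨a0, a1, rfl⟩ := len2 ha
  obtain ⟨c0, c1, rfl⟩ := len2 hc
  obtain ⟨xv, hxl⟩ := x
  obtain ⟨lx, rfl⟩ : ∃ l, xv = l ++ [a0, a1] := hx
  obtain ⟨yv, hyl⟩ := y
  obtain ⟨ly, rfl⟩ : ∃ l, yv = l ++ [c0, c1] := hy
  have hsa : ([a0, a1] : List Bool).length ≤ h + 2 := by simp
  have hsc : ([c0, c1] : List Bool).length ≤ h + 2 := by simp
  obtain ⟨p1, hp1⟩ := walk_to_copy_root (n := h + 2) [a0, a1] lx hxl hsa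
  obtain ⟨p3, hp3⟩ := walk_to_copy_root (n := h + 2) [c0, c1] ly hyl hsc
  have h1a : (([a1] : List Bool)).length ≤ h + 2 := by simp
  have h1c : (([c1] : List Bool)).length ≤ h + 2 := by simp
  have h0 : (([] : List Bool)).length ≤ h + 2 := by simp
  have adj1 : (CBT (h + 2)).Adj ⟨[a0, a1], hsa⟩ ⟨[a1], h1a⟩ := Or.inl ⟨a0, rfl⟩
  have adj2 : (CBT (h + 2)).Adj ⟨[a1], h1a⟩ ⟨[], h0⟩ := Or.inl ⟨a1, rfl⟩
  have adj3 : (CBT (h + 2)).Adj ⟨[], h0⟩ ⟨[c1], h1c⟩ := Or.inr ⟨c1, rfl⟩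
  have adj4 : (CBT (h + 2)).Adj ⟨[c1], h1c⟩ ⟨[c0, c1], hsc⟩ := Or.inr ⟨c0, rfl⟩
  let p2 : (CBT (h + 2)).Walk ⟨[a0, a1], hsa⟩ ⟨[c0, c1], hsc⟩ :=
    .cons adj1 (.cons adj2 (.cons adj3 (.cons adj4 .nil)))
  refine ⟨p1.append (p2.append p3.reverse), ?_⟩
  intro z hz
  rw [SimpleGraph.Walk.mem_support_append_iff, SimpleGraph.Walk.mem_support_append_iff,
    SimpleGraph.Walk.support_reverse, List.mem_reverse] at hz
  rcases hz with hz | hz | hz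
  · exact Or.inr (Or.inl (hp1 z hz))
  · have : z ∈ [(⟨[a0, a1], hsa⟩ : CBTVert (h + 2)), ⟨[a1], h1a⟩, ⟨[], h0⟩,
        ⟨[c1], h1c⟩, ⟨[c0, c1], hsc⟩] := by
      simpa [p2, SimpleGraph.Walk.support_cons] using hz
    simp only [List.mem_cons, List.not_mem_nil, or_false] at this
    rcases this with rfl | rfl | rfl | rfl | rfl
    · exact Or.inr (Or.inl ⟨[], rfl⟩)
    · exact Or.inl (by simp)
    · exact Or.inl (by simp)
    · exact Or.inl (by simp)
    · exact Or.inr (Or.inr ⟨[], rfl⟩)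
  · exact Or.inr (Or.inr (hp3 z hz))

end CBTP
end Walks
section LB
namespace CBTP

lemma suffix_unique {sa sb : List Bool} (ha : sa.length = 2) (hb : sb.length = 2)
    {L : List Bool} {l l' : List Bool} (h1 : L = l ++ sa) (h2 : L = l' ++ sb) : sa = sb := by
  exact (List.append_inj' (h1.symm.trans h2) (ha.trans hb.symm)).2

/-- The middle bag gets an extra vertex. -/
lemma mid_bag {h : ℕ} (D : PathDecomp (CBT (h + 2))) {sa sb sc : List Bool}
    (ha : sa.length = 2) (hb : sb.length = 2) (hc : sc.length = 2)
    (hab : sa ≠ sb) (hcb : sc ≠ sb) {ia ib ic : Fin (D.n + 1)}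
    (hiab : ia ≤ ib) (hibc : ib ≤ ic)
    {x y : CBTVert (h + 2)} (hxa : x ∈ D.bag ia) (hyc : y ∈ D.bag ic)
    (hxs : ∃ l, x.val = l ++ sa) (hys : ∃ l, y.val = l ++ sc)
    {Sb : Finset (CBTVert (h + 2))} (hSb : Sb ⊆ D.bag ib)
    (hSbs : ∀ z ∈ Sb, ∃ l, z.val = l ++ sb) :
    Sb.card + 1 ≤ (D.bag ib).card := by
  obtain ⟨p, hp⟩ := walk_between ha hc x y hxs hys
  obtain ⟨z, hzbag, hzsup⟩ := cross D p hiab hibc hxa hyc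
  have hzS : z ∉ Sb := by
    intro hzSb
    obtain ⟨l, hl⟩ := hSbs z hzSb
    rcases hp z hzsup with hlen | ⟨l', hl'⟩ | ⟨l', hl'⟩
    · rw [hl, List.length_append, hb] at hlen; omega
    · exact hab (suffix_unique ha hb hl' hl)
    · exact hcb (suffix_unique hc hb hl' hl)
  classical
  have hsub : insert z Sb ⊆ D.bag ib := by
    intro w hw
    rcases Finset.mem_insert.1 hw with rfl | hw
    · exact hzbag
    · exact hSb hw
  calc Sb.card + 1 = (insert z Sb).card := (Finset.card_insert_of_notMem hzS).symm
    _ ≤ (D.bag ib).card := Finset.card_le_card hsub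

/-- For each length-2 suffix, some bag contains many vertices of that copy. -/
lemma copy_bag {h : ℕ} (IH : ∀ D : PathDecomp (CBT h), ∃ i, (h + 1) / 2 + 1 ≤ (D.bag i).card)
    (D : PathDecomp (CBT (h + 2))) (s : List Bool) (hs : s.length = 2) :
    ∃ (i : Fin (D.n + 1)) (S : Finset (CBTVert (h + 2))),
      S ⊆ D.bag i ∧ (h + 1) / 2 + 1 ≤ S.card ∧ (∀ z ∈ S, ∃ l, z.val = l ++ s) ∧
      (∃ x ∈ S, True) := by
  classical
  let f := emb h s hs
  let D' : PathDecomp (CBT h) := D.restrict (CBT h) f emb_inj (fun a b hab => emb_adj hab)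
  obtain ⟨i, hi⟩ := IH D'
  refine ⟨i, (D'.bag i).image f, ?_, ?_, ?_, ?_⟩
  · intro z hz
    obtain ⟨a, ha, rfl⟩ := Finset.mem_image.1 hz
    have ha' : a ∈ (D.bag i).preimage f emb_inj.injOn := ha
    exact Finset.mem_preimage.1 ha'
  · rwa [Finset.card_image_of_injOn emb_inj.injOn]
  · intro z hz
    obtain ⟨a, _, rfl⟩ := Finset.mem_image.1 hz
    exact ⟨a.val, rfl⟩
  · have : ((D'.bag i).image f).Nonempty := by
      rw [Finset.image_nonempty]
      exact Finset.card_pos.1 (by omega)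
    obtain ⟨x, hx⟩ := this
    exact ⟨x, hx, trivial⟩

lemma lb : ∀ h : ℕ, ∀ D : PathDecomp (CBT h), ∃ i, (h + 1) / 2 + 1 ≤ (D.bag i).card := by
  intro h
  induction h using Nat.strong_induction_on with
  | _ h IH =>
    match h with
    | 0 =>
      intro D
      obtain ⟨i, hi⟩ := D.cov_vert (CBTroot 0)
      exact ⟨i, Finset.card_pos.2 ⟨_, hi⟩⟩
    | 1 =>
      intro D
      have hadj : (CBT 1).Adj ⟨[false], by simp⟩ ⟨[], by simp⟩ := Or.inl ⟨false, rfl⟩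
      obtain ⟨i, h1, h2⟩ := D.cov_edge hadj
      refine ⟨i, Finset.one_lt_card.2 ⟨_, h1, _, h2, ?_⟩⟩
      intro hcon
      simpa using congrArg Subtype.val hcon
    | (h + 2) =>
      intro D
      have IH' := IH h (by omega)
      obtain ⟨i1, S1, hS1, hc1, hsuf1, x1, hx1, -⟩ :=
        copy_bag IH' D [false, false] (by simp)
      obtain ⟨i2, S2, hS2, hc2, hsuf2, x2, hx2, -⟩ :=
        copy_bag IH' D [true, false] (by simp)
      obtain ⟨i3, S3, hS3, hc3, hsuf3, x3, hx3, -⟩ :=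
        copy_bag IH' D [false, true] (by simp)
      have key : ∃ j : Fin (D.n + 1), (h + 1) / 2 + 2 ≤ (D.bag j).card := by
        have d12 : ([false, false] : List Bool) ≠ [true, false] := by simp
        have d13 : ([false, false] : List Bool) ≠ [false, true] := by simp
        have d21 : ([true, false] : List Bool) ≠ [false, false] := by simp
        have d23 : ([true, false] : List Bool) ≠ [false, true] := by simp
        have d31 : ([false, true] : List Bool) ≠ [false, false] := by simp
        have d32 : ([false, true] : List Bool) ≠ [true, false] := by simp
        rcases le_total i1 i2 with h12 | h21 <;> rcases le_total i2 i3 with h23 | h32 <;>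
          rcases le_total i1 i3 with h13 | h31
        · exact ⟨i2, le_trans (by omega) (mid_bag D (by simp) (by simp) (by simp) d12 d32
            h12 h23 (hS1 hx1) (hS3 hx3) (hsuf1 _ hx1) (hsuf3 _ hx3) hS2 hsuf2)⟩
        · exact ⟨i2, le_trans (by omega) (mid_bag D (by simp) (by simp) (by simp) d12 d32
            h12 h23 (hS1 hx1) (hS3 hx3) (hsuf1 _ hx1) (hsuf3 _ hx3) hS2 hsuf2)⟩
        · exact ⟨i3, le_trans (by omega) (mid_bag D (by simp) (by simp) (by simp) d13 d23
            h13 h32 (hS1 hx1) (hS2 hx2) (hsuf1 _ hx1) (hsuf2 _ hx2) hS3 hsuf3)⟩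
        · exact ⟨i1, le_trans (by omega) (mid_bag D (by simp) (by simp) (by simp) d31 d21
            h31 h12 (hS3 hx3) (hS2 hx2) (hsuf3 _ hx3) (hsuf2 _ hx2) hS1 hsuf1)⟩
        · exact ⟨i1, le_trans (by omega) (mid_bag D (by simp) (by simp) (by simp) d21 d31
            h21 h13 (hS2 hx2) (hS3 hx3) (hsuf2 _ hx2) (hsuf3 _ hx3) hS1 hsuf1)⟩
        · exact ⟨i3, le_trans (by omega) (mid_bag D (by simp) (by simp) (by simp) d23 d13
            h23 h31 (hS2 hx2) (hS1 hx1) (hsuf2 _ hx2) (hsuf1 _ hx1) hS3 hsuf3)⟩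
        · exact ⟨i2, le_trans (by omega) (mid_bag D (by simp) (by simp) (by simp) d32 d12
            h32 h21 (hS3 hx3) (hS1 hx1) (hsuf3 _ hx3) (hsuf1 _ hx1) hS2 hsuf2)⟩
        · exact ⟨i2, le_trans (by omega) (mid_bag D (by simp) (by simp) (by simp) d32 d12
            h32 h21 (hS3 hx3) (hS1 hx1) (hsuf3 _ hx3) (hsuf1 _ hx1) hS2 hsuf2)⟩
      obtain ⟨j, hj⟩ := key
      exact ⟨j, by omega⟩

end CBTP
end LB
section UB
namespace CBTP
open Finset

variable {h : ℕ}

def av : CBTVert (h + 2) := ⟨[false], by simp⟩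
def bv : CBTVert (h + 2) := ⟨[true], by simp⟩
def rv : CBTVert (h + 2) := ⟨[], by simp⟩

variable (D : PathDecomp (CBT h))

/-- Clamped bag access. -/
def dbag (m : ℕ) : Finset (CBTVert h) := D.bag ⟨min m D.n, by omega⟩

lemma dbag_interval (v : CBTVert h) {i j k : ℕ} (hij : i ≤ j) (hjk : j ≤ k)
    (hi : v ∈ dbag D i) (hk : v ∈ dbag D k) : v ∈ dbag D j :=
  D.interval v _ _ _ (Fin.mk_le_mk.2 (min_le_min hij le_rfl))
    (Fin.mk_le_mk.2 (min_le_min hjk le_rfl)) hi hk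

lemma dbag_fin (j : Fin (D.n + 1)) : dbag D j.val = D.bag j := by
  unfold dbag
  congr 1
  exact Fin.ext (min_eq_left (Nat.lt_succ_iff.1 j.2))

noncomputable def bagN (i : ℕ) : Finset (CBTVert (h + 2)) :=
  if i ≤ D.n then (dbag D i).image (emb h [false, false] rfl) ∪ {av}
  else if i ≤ 2 * D.n + 1 then
    (dbag D (i - (D.n + 1))).image (emb h [true, false] rfl) ∪ {av}
  else if i = 2 * D.n + 2 then {av, rv}
  else if i = 2 * D.n + 3 then {rv, bv}
  else if i ≤ 3 * D.n + 4 then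
    (dbag D (i - (2 * D.n + 4))).image (emb h [false, true] rfl) ∪ {bv}
  else (dbag D (i - (3 * D.n + 5))).image (emb h [true, true] rfl) ∪ {bv}

lemma mem_image_emb {s : List Bool} {hs : s.length = 2} {l : List Bool}
    {hl2 : (l ++ s).length ≤ h + 2} (hl : l.length ≤ h) {B : Finset (CBTVert h)} :
    (⟨l ++ s, hl2⟩ : CBTVert (h + 2)) ∈ B.image (emb h s hs) ↔ ⟨l, hl⟩ ∈ B := by
  constructor
  · intro hmem
    obtain ⟨y, hy, hEq⟩ := Finset.mem_image.1 hmem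
    have : y.val ++ s = l ++ s := congrArg Subtype.val hEq
    have hyl : y = ⟨l, hl⟩ := Subtype.ext (List.append_inj' this rfl).1
    rwa [hyl] at hy
  · intro hmem
    have : emb h s hs ⟨l, hl⟩ = ⟨l ++ s, hl2⟩ := Subtype.ext rfl
    exact this ▸ Finset.mem_image_of_mem _ hmem

lemma not_mem_image_emb_ne {s t : List Bool} (hs : s.length = 2) {ht : t.length = 2}
    (hst : s ≠ t) {l : List Bool} {hl2 : (l ++ s).length ≤ h + 2} {B : Finset (CBTVert h)} :
    (⟨l ++ s, hl2⟩ : CBTVert (h + 2)) ∉ B.image (emb h t ht) := by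
  intro hmem
  obtain ⟨y, _, hEq⟩ := Finset.mem_image.1 hmem
  have : y.val ++ t = l ++ s := congrArg Subtype.val hEq
  exact hst (List.append_inj' this (ht.trans hs.symm)).2.symm

lemma short_not_mem_image {x : CBTVert (h + 2)} (hx : x.val.length ≤ 1)
    {s : List Bool} {ht : s.length = 2} {B : Finset (CBTVert h)} :
    x ∉ B.image (emb h s ht) := by
  intro hmem
  obtain ⟨y, _, hEq⟩ := Finset.mem_image.1 hmem
  have : y.val ++ s = x.val := congrArg Subtype.val hEq
  rw [← this, List.length_append, ht] at hx
  omega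

end CBTP
end UB
section UB2
namespace CBTP
open Finset

variable {h : ℕ} (D : PathDecomp (CBT h))

lemma long_mem_union_same {s : List Bool} {hs : s.length = 2} {l : List Bool}
    {hl2 : (l ++ s).length ≤ h + 2} (hl : l.length ≤ h) {B : Finset (CBTVert h)}
    {e : CBTVert (h + 2)} (he : e.val.length ≤ 1) :
    ((⟨l ++ s, hl2⟩ : CBTVert (h + 2)) ∈ B.image (emb h s hs) ∪ {e}) ↔ ⟨l, hl⟩ ∈ B := by
  rw [Finset.mem_union, Finset.mem_singleton, mem_image_emb hl]
  constructor
  · rintro (hm | hEq)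
    · exact hm
    · exfalso
      have := congrArg (fun v : CBTVert (h + 2) => v.val.length) hEq
      simp only [List.length_append, hs] at this
      omega
  · exact Or.inl

lemma long_not_mem_union_ne {s t : List Bool} (hs : s.length = 2) {ht : t.length = 2}
    (hst : s ≠ t) {l : List Bool} {hl2 : (l ++ s).length ≤ h + 2} {B : Finset (CBTVert h)}
    {e : CBTVert (h + 2)} (he : e.val.length ≤ 1) :
    (⟨l ++ s, hl2⟩ : CBTVert (h + 2)) ∉ B.image (emb h t ht) ∪ {e} := by
  intro hmem
  rcases Finset.mem_union.1 hmem with hA | hB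
  · exact not_mem_image_emb_ne hs hst hA
  · have := congrArg (fun v : CBTVert (h + 2) => v.val.length) (Finset.mem_singleton.1 hB)
    simp only [List.length_append, hs] at this
    omega

lemma long_not_mem_pair {s : List Bool} (hs : s.length = 2) {l : List Bool}
    {hl2 : (l ++ s).length ≤ h + 2} {e1 e2 : CBTVert (h + 2)}
    (he1 : e1.val.length ≤ 1) (he2 : e2.val.length ≤ 1) :
    (⟨l ++ s, hl2⟩ : CBTVert (h + 2)) ∉ ({e1, e2} : Finset (CBTVert (h + 2))) := by
  intro hmem
  rcases Finset.mem_insert.1 hmem with hEq | hEq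
  · have := congrArg (fun v : CBTVert (h + 2) => v.val.length) hEq
    simp only [List.length_append, hs] at this
    omega
  · have := congrArg (fun v : CBTVert (h + 2) => v.val.length) (Finset.mem_singleton.1 hEq)
    simp only [List.length_append, hs] at this
    omega

lemma mem_av (i : ℕ) : (av : CBTVert (h + 2)) ∈ bagN D i ↔ i ≤ 2 * D.n + 2 := by
  unfold bagN
  split_ifs with h1 h2 h3 h4 h5
  · exact iff_of_true (Finset.mem_union_right _ (Finset.mem_singleton_self _)) (by omega)
  · exact iff_of_true (Finset.mem_union_right _ (Finset.mem_singleton_self _)) (by omega)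
  · exact iff_of_true (Finset.mem_insert_self _ _) (by omega)
  · refine iff_of_false ?_ (by omega)
    intro hmem
    rcases Finset.mem_insert.1 hmem with hEq | hEq
    · exact absurd (congrArg Subtype.val hEq) (by simp [av, rv])
    · exact absurd (congrArg Subtype.val (Finset.mem_singleton.1 hEq)) (by simp [av, bv])
  all_goals
    refine iff_of_false ?_ (by omega)
    intro hmem
    rcases Finset.mem_union.1 hmem with hA | hB
    · exact short_not_mem_image (by simp [av]) hA
    · exact absurd (congrArg Subtype.val (Finset.mem_singleton.1 hB)) (by simp [av, bv])

lemma mem_rv (i : ℕ) :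
    (rv : CBTVert (h + 2)) ∈ bagN D i ↔ (i = 2 * D.n + 2 ∨ i = 2 * D.n + 3) := by
  unfold bagN
  split_ifs with h1 h2 h3 h4 h5
  · refine iff_of_false ?_ (by omega)
    intro hmem
    rcases Finset.mem_union.1 hmem with hA | hB
    · exact short_not_mem_image (by simp [rv]) hA
    · exact absurd (congrArg Subtype.val (Finset.mem_singleton.1 hB)) (by simp [av, rv])
  · refine iff_of_false ?_ (by omega)
    intro hmem
    rcases Finset.mem_union.1 hmem with hA | hB
    · exact short_not_mem_image (by simp [rv]) hA
    · exact absurd (congrArg Subtype.val (Finset.mem_singleton.1 hB)) (by simp [av, rv])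
  · exact iff_of_true (Finset.mem_insert.2 (Or.inr (Finset.mem_singleton_self _))) (by omega)
  · exact iff_of_true (Finset.mem_insert_self _ _) (by omega)
  all_goals
    refine iff_of_false ?_ (by omega)
    intro hmem
    rcases Finset.mem_union.1 hmem with hA | hB
    · exact short_not_mem_image (by simp [rv]) hA
    · exact absurd (congrArg Subtype.val (Finset.mem_singleton.1 hB)) (by simp [bv, rv])

lemma mem_bv (i : ℕ) : (bv : CBTVert (h + 2)) ∈ bagN D i ↔ 2 * D.n + 3 ≤ i := by
  unfold bagN
  split_ifs with h1 h2 h3 h4 h5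
  · refine iff_of_false ?_ (by omega)
    intro hmem
    rcases Finset.mem_union.1 hmem with hA | hB
    · exact short_not_mem_image (by simp [bv]) hA
    · exact absurd (congrArg Subtype.val (Finset.mem_singleton.1 hB)) (by simp [av, bv])
  · refine iff_of_false ?_ (by omega)
    intro hmem
    rcases Finset.mem_union.1 hmem with hA | hB
    · exact short_not_mem_image (by simp [bv]) hA
    · exact absurd (congrArg Subtype.val (Finset.mem_singleton.1 hB)) (by simp [av, bv])
  · refine iff_of_false ?_ (by omega)
    intro hmem
    rcases Finset.mem_insert.1 hmem with hEq | hEq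
    · exact absurd (congrArg Subtype.val hEq) (by simp [bv, av, rv])
    · exact absurd (congrArg Subtype.val (Finset.mem_singleton.1 hEq)) (by simp [bv, rv])
  · exact iff_of_true (Finset.mem_insert.2 (Or.inr (Finset.mem_singleton_self _))) (by omega)
  all_goals
    exact iff_of_true (Finset.mem_union_right _ (Finset.mem_singleton_self _)) (by omega)

lemma mem_c1 (i : ℕ) {l : List Bool} (hl : l.length ≤ h)
    (hl2 : (l ++ [false, false]).length ≤ h + 2) :
    ((⟨l ++ [false, false], hl2⟩ : CBTVert (h + 2)) ∈ bagN D i) ↔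
      i ≤ D.n ∧ ⟨l, hl⟩ ∈ dbag D i := by
  unfold bagN
  split_ifs with h1 h2 h3 h4 h5
  · rw [long_mem_union_same hl (by simp [av])]
    exact (and_iff_right h1).symm
  · exact iff_of_false (long_not_mem_union_ne (s := [false, false]) rfl (by simp) (by simp [av])) (by omega)
  · exact iff_of_false (long_not_mem_pair (s := [false, false]) rfl (by simp [av]) (by simp [rv])) (by omega)
  · exact iff_of_false (long_not_mem_pair (s := [false, false]) rfl (by simp [rv]) (by simp [bv])) (by omega)
  · exact iff_of_false (long_not_mem_union_ne (s := [false, false]) rfl (by simp) (by simp [bv])) (by omega)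
  · exact iff_of_false (long_not_mem_union_ne (s := [false, false]) rfl (by simp) (by simp [bv])) (by omega)

lemma mem_c2 (i : ℕ) {l : List Bool} (hl : l.length ≤ h)
    (hl2 : (l ++ [true, false]).length ≤ h + 2) :
    ((⟨l ++ [true, false], hl2⟩ : CBTVert (h + 2)) ∈ bagN D i) ↔
      D.n + 1 ≤ i ∧ i ≤ 2 * D.n + 1 ∧ ⟨l, hl⟩ ∈ dbag D (i - (D.n + 1)) := by
  unfold bagN
  split_ifs with h1 h2 h3 h4 h5
  · exact iff_of_false (long_not_mem_union_ne (s := [true, false]) rfl (by simp) (by simp [av])) (by omega)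
  · rw [long_mem_union_same hl (by simp [av])]
    exact ⟨fun hm => ⟨by omega, h2, hm⟩, fun hm => hm.2.2⟩
  · exact iff_of_false (long_not_mem_pair (s := [true, false]) rfl (by simp [av]) (by simp [rv])) (by omega)
  · exact iff_of_false (long_not_mem_pair (s := [true, false]) rfl (by simp [rv]) (by simp [bv])) (by omega)
  · exact iff_of_false (long_not_mem_union_ne (s := [true, false]) rfl (by simp) (by simp [bv])) (by omega)
  · exact iff_of_false (long_not_mem_union_ne (s := [true, false]) rfl (by simp) (by simp [bv])) (by omega)

lemma mem_c3 (i : ℕ) {l : List Bool} (hl : l.length ≤ h)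
    (hl2 : (l ++ [false, true]).length ≤ h + 2) :
    ((⟨l ++ [false, true], hl2⟩ : CBTVert (h + 2)) ∈ bagN D i) ↔
      2 * D.n + 4 ≤ i ∧ i ≤ 3 * D.n + 4 ∧ ⟨l, hl⟩ ∈ dbag D (i - (2 * D.n + 4)) := by
  unfold bagN
  split_ifs with h1 h2 h3 h4 h5
  · exact iff_of_false (long_not_mem_union_ne (s := [false, true]) rfl (by simp) (by simp [av])) (by omega)
  · exact iff_of_false (long_not_mem_union_ne (s := [false, true]) rfl (by simp) (by simp [av])) (by omega)
  · exact iff_of_false (long_not_mem_pair (s := [false, true]) rfl (by simp [av]) (by simp [rv])) (by omega)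
  · exact iff_of_false (long_not_mem_pair (s := [false, true]) rfl (by simp [rv]) (by simp [bv])) (by omega)
  · rw [long_mem_union_same hl (by simp [bv])]
    exact ⟨fun hm => ⟨by omega, h5, hm⟩, fun hm => hm.2.2⟩
  · exact iff_of_false (long_not_mem_union_ne (s := [false, true]) rfl (by simp) (by simp [bv])) (by omega)

lemma mem_c4 (i : ℕ) {l : List Bool} (hl : l.length ≤ h)
    (hl2 : (l ++ [true, true]).length ≤ h + 2) :
    ((⟨l ++ [true, true], hl2⟩ : CBTVert (h + 2)) ∈ bagN D i) ↔
      3 * D.n + 5 ≤ i ∧ ⟨l, hl⟩ ∈ dbag D (i - (3 * D.n + 5)) := by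
  unfold bagN
  split_ifs with h1 h2 h3 h4 h5
  · exact iff_of_false (long_not_mem_union_ne (s := [true, true]) rfl (by simp) (by simp [av])) (by omega)
  · exact iff_of_false (long_not_mem_union_ne (s := [true, true]) rfl (by simp) (by simp [av])) (by omega)
  · exact iff_of_false (long_not_mem_pair (s := [true, true]) rfl (by simp [av]) (by simp [rv])) (by omega)
  · exact iff_of_false (long_not_mem_pair (s := [true, true]) rfl (by simp [rv]) (by simp [bv])) (by omega)
  · exact iff_of_false (long_not_mem_union_ne (s := [true, true]) rfl (by simp) (by simp [bv])) (by omega)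
  · rw [long_mem_union_same hl (by simp [bv])]
    exact ⟨fun hm => ⟨by omega, hm⟩, fun hm => hm.2⟩

end CBTP
end UB2
section UB3
namespace CBTP
open Finset

variable {h : ℕ} (D : PathDecomp (CBT h))

lemma glue_cov_vert (x : CBTVert (h + 2)) : ∃ i : Fin (4 * D.n + 5 + 1), x ∈ bagN D i.val := by
  rcases list_cases2 x.val with hx | ⟨c, hx⟩ | ⟨l, c, d, hx⟩
  · have hxe : x = rv := Subtype.ext hx
    refine ⟨⟨2 * D.n + 2, by omega⟩, ?_⟩
    show x ∈ bagN D (2 * D.n + 2)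
    rw [hxe, mem_rv]
    omega
  · cases c
    · have hxe : x = av := Subtype.ext hx
      refine ⟨⟨0, by omega⟩, ?_⟩
      show x ∈ bagN D 0
      rw [hxe, mem_av]
      omega
    · have hxe : x = bv := Subtype.ext hx
      refine ⟨⟨2 * D.n + 3, by omega⟩, ?_⟩
      show x ∈ bagN D (2 * D.n + 3)
      rw [hxe, mem_bv]
  · have hl : l.length ≤ h := by
      have := x.2; rw [hx, List.length_append] at this; simpa using this
    have hl2 : (l ++ [c, d]).length ≤ h + 2 := by rw [← hx]; exact x.2
    have hxe : x = ⟨l ++ [c, d], hl2⟩ := Subtype.ext hx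
    obtain ⟨j, hj⟩ := D.cov_vert ⟨l, hl⟩
    have hjn : j.val ≤ D.n := Nat.lt_succ_iff.1 j.2
    have hjd : ⟨l, hl⟩ ∈ dbag D j.val := by rw [dbag_fin]; exact hj
    cases c <;> cases d
    · refine ⟨⟨j.val, by omega⟩, ?_⟩
      show x ∈ bagN D j.val
      rw [hxe, mem_c1 D _ hl]
      exact ⟨hjn, hjd⟩
    · refine ⟨⟨2 * D.n + 4 + j.val, by omega⟩, ?_⟩
      show x ∈ bagN D (2 * D.n + 4 + j.val)
      rw [hxe, mem_c3 D _ hl]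
      refine ⟨by omega, by omega, ?_⟩
      have e : 2 * D.n + 4 + j.val - (2 * D.n + 4) = j.val := by omega
      rw [e]; exact hjd
    · refine ⟨⟨D.n + 1 + j.val, by omega⟩, ?_⟩
      show x ∈ bagN D (D.n + 1 + j.val)
      rw [hxe, mem_c2 D _ hl]
      refine ⟨by omega, by omega, ?_⟩
      have e : D.n + 1 + j.val - (D.n + 1) = j.val := by omega
      rw [e]; exact hjd
    · refine ⟨⟨3 * D.n + 5 + j.val, by omega⟩, ?_⟩
      show x ∈ bagN D (3 * D.n + 5 + j.val)
      rw [hxe, mem_c4 D _ hl]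
      refine ⟨by omega, ?_⟩
      have e : 3 * D.n + 5 + j.val - (3 * D.n + 5) = j.val := by omega
      rw [e]; exact hjd

lemma glue_cov_edge_key (u w : CBTVert (h + 2)) (bit : Bool) (hb : u.val = bit :: w.val) :
    ∃ i : Fin (4 * D.n + 5 + 1), u ∈ bagN D i.val ∧ w ∈ bagN D i.val := by
  rcases list_cases2 w.val with hw | ⟨c, hw⟩ | ⟨l, c, d, hw⟩
  · have hwe : w = rv := Subtype.ext hw
    have hue : u.val = [bit] := by rw [hb, hw]
    cases bit
    · have hua : u = av := Subtype.ext hue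
      refine ⟨⟨2 * D.n + 2, by omega⟩, ?_, ?_⟩
      · show u ∈ bagN D (2 * D.n + 2)
        rw [hua, mem_av]
      · show w ∈ bagN D (2 * D.n + 2)
        rw [hwe, mem_rv]; omega
    · have hub : u = bv := Subtype.ext hue
      refine ⟨⟨2 * D.n + 3, by omega⟩, ?_, ?_⟩
      · show u ∈ bagN D (2 * D.n + 3)
        rw [hub, mem_bv]
      · show w ∈ bagN D (2 * D.n + 3)
        rw [hwe, mem_rv]; omega
  · have hue : u.val = [] ++ [bit, c] := by rw [hb, hw]; rfl
    have hl2 : (([] : List Bool) ++ [bit, c]).length ≤ h + 2 := by rw [← hue]; exact u.2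
    have huE : u = ⟨[] ++ [bit, c], hl2⟩ := Subtype.ext hue
    obtain ⟨j, hj⟩ := D.cov_vert ⟨[], by simp⟩
    have hjn : j.val ≤ D.n := Nat.lt_succ_iff.1 j.2
    have hjd : (⟨[], by simp⟩ : CBTVert h) ∈ dbag D j.val := by rw [dbag_fin]; exact hj
    cases c
    · have hwe : w = av := Subtype.ext hw
      cases bit
      · refine ⟨⟨j.val, by omega⟩, ?_, ?_⟩
        · show u ∈ bagN D j.val
          rw [huE, mem_c1 D _ (by simp)]
          exact ⟨hjn, hjd⟩
        · show w ∈ bagN D j.val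
          rw [hwe, mem_av]; omega
      · refine ⟨⟨D.n + 1 + j.val, by omega⟩, ?_, ?_⟩
        · show u ∈ bagN D (D.n + 1 + j.val)
          rw [huE, mem_c2 D _ (by simp)]
          refine ⟨by omega, by omega, ?_⟩
          have e : D.n + 1 + j.val - (D.n + 1) = j.val := by omega
          rw [e]; exact hjd
        · show w ∈ bagN D (D.n + 1 + j.val)
          rw [hwe, mem_av]; omega
    · have hwe : w = bv := Subtype.ext hw
      cases bit
      · refine ⟨⟨2 * D.n + 4 + j.val, by omega⟩, ?_, ?_⟩
        · show u ∈ bagN D (2 * D.n + 4 + j.val)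
          rw [huE, mem_c3 D _ (by simp)]
          refine ⟨by omega, by omega, ?_⟩
          have e : 2 * D.n + 4 + j.val - (2 * D.n + 4) = j.val := by omega
          rw [e]; exact hjd
        · show w ∈ bagN D (2 * D.n + 4 + j.val)
          rw [hwe, mem_bv]; omega
      · refine ⟨⟨3 * D.n + 5 + j.val, by omega⟩, ?_, ?_⟩
        · show u ∈ bagN D (3 * D.n + 5 + j.val)
          rw [huE, mem_c4 D _ (by simp)]
          refine ⟨by omega, ?_⟩
          have e : 3 * D.n + 5 + j.val - (3 * D.n + 5) = j.val := by omega
          rw [e]; exact hjd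
        · show w ∈ bagN D (3 * D.n + 5 + j.val)
          rw [hwe, mem_bv]; omega
  · have hl : l.length ≤ h := by
      have := w.2; rw [hw, List.length_append] at this; simpa using this
    have hbl : (bit :: l).length ≤ h := by
      have := u.2; rw [hb, hw] at this; simp at this ⊢; omega
    have hwl2 : (l ++ [c, d]).length ≤ h + 2 := by rw [← hw]; exact w.2
    have hul : u.val = (bit :: l) ++ [c, d] := by rw [hb, hw]; rfl
    have hul2 : ((bit :: l) ++ [c, d]).length ≤ h + 2 := by rw [← hul]; exact u.2
    have huE : u = ⟨(bit :: l) ++ [c, d], hul2⟩ := Subtype.ext hul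
    have hwE : w = ⟨l ++ [c, d], hwl2⟩ := Subtype.ext hw
    have hadj : (CBT h).Adj ⟨bit :: l, hbl⟩ ⟨l, hl⟩ := Or.inl ⟨bit, rfl⟩
    obtain ⟨j, hj1, hj2⟩ := D.cov_edge hadj
    have hjn : j.val ≤ D.n := Nat.lt_succ_iff.1 j.2
    have hjd1 : (⟨bit :: l, hbl⟩ : CBTVert h) ∈ dbag D j.val := by rw [dbag_fin]; exact hj1
    have hjd2 : (⟨l, hl⟩ : CBTVert h) ∈ dbag D j.val := by rw [dbag_fin]; exact hj2
    cases c <;> cases d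
    · refine ⟨⟨j.val, by omega⟩, ?_, ?_⟩
      · show u ∈ bagN D j.val
        rw [huE, mem_c1 D _ hbl]; exact ⟨hjn, hjd1⟩
      · show w ∈ bagN D j.val
        rw [hwE, mem_c1 D _ hl]; exact ⟨hjn, hjd2⟩
    · refine ⟨⟨2 * D.n + 4 + j.val, by omega⟩, ?_, ?_⟩
      · show u ∈ bagN D (2 * D.n + 4 + j.val)
        rw [huE, mem_c3 D _ hbl]
        refine ⟨by omega, by omega, ?_⟩
        have e : 2 * D.n + 4 + j.val - (2 * D.n + 4) = j.val := by omega
        rw [e]; exact hjd1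
      · show w ∈ bagN D (2 * D.n + 4 + j.val)
        rw [hwE, mem_c3 D _ hl]
        refine ⟨by omega, by omega, ?_⟩
        have e : 2 * D.n + 4 + j.val - (2 * D.n + 4) = j.val := by omega
        rw [e]; exact hjd2
    · refine ⟨⟨D.n + 1 + j.val, by omega⟩, ?_, ?_⟩
      · show u ∈ bagN D (D.n + 1 + j.val)
        rw [huE, mem_c2 D _ hbl]
        refine ⟨by omega, by omega, ?_⟩
        have e : D.n + 1 + j.val - (D.n + 1) = j.val := by omega
        rw [e]; exact hjd1
      · show w ∈ bagN D (D.n + 1 + j.val)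
        rw [hwE, mem_c2 D _ hl]
        refine ⟨by omega, by omega, ?_⟩
        have e : D.n + 1 + j.val - (D.n + 1) = j.val := by omega
        rw [e]; exact hjd2
    · refine ⟨⟨3 * D.n + 5 + j.val, by omega⟩, ?_, ?_⟩
      · show u ∈ bagN D (3 * D.n + 5 + j.val)
        rw [huE, mem_c4 D _ hbl]
        refine ⟨by omega, ?_⟩
        have e : 3 * D.n + 5 + j.val - (3 * D.n + 5) = j.val := by omega
        rw [e]; exact hjd1
      · show w ∈ bagN D (3 * D.n + 5 + j.val)
        rw [hwE, mem_c4 D _ hl]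
        refine ⟨by omega, ?_⟩
        have e : 3 * D.n + 5 + j.val - (3 * D.n + 5) = j.val := by omega
        rw [e]; exact hjd2

lemma glue_interval (x : CBTVert (h + 2)) (i j k : Fin (4 * D.n + 5 + 1))
    (hij : i ≤ j) (hjk : j ≤ k) (hi : x ∈ bagN D i.val) (hk : x ∈ bagN D k.val) :
    x ∈ bagN D j.val := by
  have hij' : i.val ≤ j.val := hij
  have hjk' : j.val ≤ k.val := hjk
  rcases list_cases2 x.val with hx | ⟨c, hx⟩ | ⟨l, c, d, hx⟩
  · have hxe : x = rv := Subtype.ext hx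
    rw [hxe, mem_rv] at hi hk ⊢
    omega
  · cases c
    · have hxe : x = av := Subtype.ext hx
      rw [hxe, mem_av] at hi hk ⊢
      omega
    · have hxe : x = bv := Subtype.ext hx
      rw [hxe, mem_bv] at hi hk ⊢
      omega
  · have hl : l.length ≤ h := by
      have := x.2; rw [hx, List.length_append] at this; simpa using this
    have hl2 : (l ++ [c, d]).length ≤ h + 2 := by rw [← hx]; exact x.2
    have hxe : x = ⟨l ++ [c, d], hl2⟩ := Subtype.ext hx
    cases c <;> cases d
    · rw [hxe, mem_c1 D _ hl] at hi hk ⊢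
      exact ⟨by omega, dbag_interval D _ hij' hjk' hi.2 hk.2⟩
    · rw [hxe, mem_c3 D _ hl] at hi hk ⊢
      exact ⟨by omega, by omega,
        dbag_interval D _ (by omega) (by omega) hi.2.2 hk.2.2⟩
    · rw [hxe, mem_c2 D _ hl] at hi hk ⊢
      exact ⟨by omega, by omega,
        dbag_interval D _ (by omega) (by omega) hi.2.2 hk.2.2⟩
    · rw [hxe, mem_c4 D _ hl] at hi hk ⊢
      exact ⟨by omega, dbag_interval D _ (by omega) (by omega) hi.2 hk.2⟩

noncomputable def glue : PathDecomp (CBT (h + 2)) where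
  n := 4 * D.n + 5
  bag i := bagN D i.val
  cov_edge := by
    rintro u w (⟨bit, hb⟩ | ⟨bit, hb⟩)
    · exact glue_cov_edge_key D u w bit hb
    · obtain ⟨i, h1, h2⟩ := glue_cov_edge_key D w u bit hb
      exact ⟨i, h2, h1⟩
  cov_vert := glue_cov_vert D
  interval := glue_interval D

lemma card_bagN {w : ℕ} (hw : ∀ i, (D.bag i).card ≤ w + 1) (i : ℕ) :
    (bagN D i).card ≤ w + 2 := by
  have hd : ∀ m, (dbag D m).card ≤ w + 1 := fun m => hw _
  unfold bagN
  split_ifs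
  case _ => exact (card_union_le _ _).trans (by
    have := (Finset.card_image_le (s := dbag D i) (f := emb h [false, false] rfl))
    simp only [card_singleton]
    have := hd i
    omega)
  case _ => exact (card_union_le _ _).trans (by
    have := (Finset.card_image_le (s := dbag D (i - (D.n + 1))) (f := emb h [true, false] rfl))
    simp only [card_singleton]
    have := hd (i - (D.n + 1))
    omega)
  case _ => exact (Finset.card_insert_le _ _).trans (by simp)
  case _ => exact (Finset.card_insert_le _ _).trans (by simp)
  case _ => exact (card_union_le _ _).trans (by
    have := (Finset.card_image_le (s := dbag D (i - (2 * D.n + 4)))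
      (f := emb h [false, true] rfl))
    simp only [card_singleton]
    have := hd (i - (2 * D.n + 4))
    omega)
  case _ => exact (card_union_le _ _).trans (by
    have := (Finset.card_image_le (s := dbag D (i - (3 * D.n + 5)))
      (f := emb h [true, true] rfl))
    simp only [card_singleton]
    have := hd (i - (3 * D.n + 5))
    omega)

lemma ub_step {w : ℕ} (hp : pwLE (CBT h) w) : pwLE (CBT (h + 2)) (w + 1) := by
  obtain ⟨D, hD⟩ := hp
  exact ⟨glue D, fun i => card_bagN D hD i.val⟩

end CBTP
end UB3
section Final
namespace CBTP

lemma ub0 : pwLE (CBT 0) 0 := by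
  refine ⟨⟨0, fun _ => {⟨[], by simp⟩}, ?_, ?_, ?_⟩, ?_⟩
  · rintro u w (⟨b, hb⟩ | ⟨b, hb⟩) <;>
    · exfalso
      have h2 := u.2
      first
        | (rw [hb] at h2; simp at h2)
        | (have h3 := w.2; rw [hb] at h3; simp at h3)
  · intro x
    have hx : x.val = [] := List.eq_nil_of_length_eq_zero (Nat.le_zero.1 x.2)
    exact ⟨0, Finset.mem_singleton.2 (Subtype.ext hx)⟩
  · intro x i j k _ _ hi _
    have : j = i := Fin.ext (by omega)
    exact hi
  · intro i
    simp

lemma ub1 : pwLE (CBT 1) 1 := by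
  classical
  refine ⟨⟨1, fun i => if i.val = 0 then {⟨[false], by simp⟩, ⟨[], by simp⟩}
      else {⟨[], by simp⟩, ⟨[true], by simp⟩}, ?_, ?_, ?_⟩, ?_⟩
  · have key : ∀ (u w : CBTVert 1) (b : Bool), u.val = b :: w.val →
        ∃ i : Fin 2, (u ∈ (if i.val = 0 then
            ({⟨[false], by simp⟩, ⟨[], by simp⟩} : Finset (CBTVert 1))
            else {⟨[], by simp⟩, ⟨[true], by simp⟩})) ∧
          (w ∈ (if i.val = 0 then ({⟨[false], by simp⟩, ⟨[], by simp⟩} : Finset (CBTVert 1))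
            else {⟨[], by simp⟩, ⟨[true], by simp⟩})) := by
      intro u w b hb
      have hw : w.val = [] := by
        have := u.2
        rw [hb] at this
        simp only [List.length_cons] at this
        exact List.eq_nil_of_length_eq_zero (by omega)
      have hwe : w = ⟨[], by simp⟩ := Subtype.ext hw
      have hue : u.val = [b] := by rw [hb, hw]
      cases b
      · have hue2 : u = ⟨[false], by simp⟩ := Subtype.ext hue
        refine ⟨0, ?_, ?_⟩
        · rw [hue2]; simp
        · rw [hwe]; simp
      · have hue2 : u = ⟨[true], by simp⟩ := Subtype.ext hue
        refine ⟨1, ?_, ?_⟩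
        · rw [hue2]; simp
        · rw [hwe]; simp
    rintro u w (⟨b, hb⟩ | ⟨b, hb⟩)
    · exact key u w b hb
    · obtain ⟨i, h1, h2⟩ := key w u b hb
      exact ⟨i, h2, h1⟩
  · intro x
    rcases list_cases2 x.val with hx | ⟨c, hx⟩ | ⟨l, c, d, hx⟩
    · have hxe : x = ⟨[], by simp⟩ := Subtype.ext hx
      exact ⟨0, by rw [hxe]; simp⟩
    · cases c
      · have hxe : x = ⟨[false], by simp⟩ := Subtype.ext hx
        exact ⟨0, by rw [hxe]; simp⟩
      · have hxe : x = ⟨[true], by simp⟩ := Subtype.ext hx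
        exact ⟨1, by rw [hxe]; simp⟩
    · exfalso
      have := x.2
      rw [hx, List.length_append] at this
      simp at this
  · intro x i j k hij hjk hi hk
    have hij' : i.val ≤ j.val := hij
    have hjk' : j.val ≤ k.val := hjk
    have : j = i ∨ j = k := by
      rcases Nat.lt_or_ge i.val 1 with h1 | h1
      · rcases Nat.lt_or_ge j.val 1 with h2 | h2
        · exact Or.inl (Fin.ext (by omega))
        · have : j.val = k.val := by omega
          exact Or.inr (Fin.ext this)
      · exact Or.inl (Fin.ext (by omega))
    rcases this with rfl | rfl
    · exact hi
    · exact hk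
  · intro i
    show (if i.val = 0 then ({⟨[false], by simp⟩, ⟨[], by simp⟩} : Finset (CBTVert 1))
        else {⟨[], by simp⟩, ⟨[true], by simp⟩}).card ≤ 1 + 1
    by_cases hi : i.val = 0
    · rw [if_pos hi]; exact (Finset.card_insert_le _ _).trans (by simp)
    · rw [if_neg hi]; exact (Finset.card_insert_le _ _).trans (by simp)

lemma ub : ∀ h : ℕ, pwLE (CBT h) ((h + 1) / 2) := by
  intro h
  induction h using Nat.strong_induction_on with
  | _ h IH =>
    match h with
    | 0 => exact ub0
    | 1 => exact ub1
    | (h + 2) =>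
      have := ub_step (IH h (by omega))
      have e : (h + 2 + 1) / 2 = (h + 1) / 2 + 1 := by omega
      rwa [e]

end CBTP
end Final
/-- The complete binary tree of height `h` has pathwidth exactly
`⌈h/2⌉`. -/
theorem stmt4 (h : ℕ) :
    pwLE (CBT h) ((h + 1) / 2) ∧ ∀ w, pwLE (CBT h) w → (h + 1) / 2 ≤ w := by
  refine ⟨CBTP.ub h, ?_⟩
  rintro w ⟨D, hD⟩
  obtain ⟨i, hi⟩ := CBTP.lb h D
  have := hD i
  omega
end Defs
end

section
/- Let T be a tree, v a vertex of T with neighbors w_1,…,w_d, and T_i the component of T−v containing w_i. Define the rooted pathwidth rpw(T,v) as the minimum width of a path decomposition of T in which v belongs to the last bag. If r_1 ≥ r_2 ≥ … ≥ r_d are the values rpw(T_i,w_i) sorted in decreasing order, then rpw(T,v) ≤ max{r_1, r_2 + 1}. -/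
open SimpleGraph

universe u v

section Defs

variable {V : Type u} {W : Type v}

/-- The vertex set of the component of `T - v` containing `u`. -/
def CompOf {V : Type u} (T : SimpleGraph V) (v u : V) : Set V :=
  {x | ∃ (hx : x ≠ v) (hu : u ≠ v),
    (T.induce {y : V | y ≠ v}).Reachable ⟨u, hu⟩ ⟨x, hx⟩}


section Helpers
variable {V : Type u}

/-- Partial path decomposition of the part of `T` inside `S`. -/
structure PPD (T : SimpleGraph V) (S : Set V) where
  n : ℕ
  bag : ℕ → Finset V
  sub : ∀ i, i ≤ n → ∀ x ∈ bag i, x ∈ S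
  cov_vert : ∀ x ∈ S, ∃ i, i ≤ n ∧ x ∈ bag i
  cov_edge : ∀ ⦃x y⦄, x ∈ S → y ∈ S → T.Adj x y → ∃ i, i ≤ n ∧ x ∈ bag i ∧ y ∈ bag i
  interval : ∀ x i j k, i ≤ j → j ≤ k → k ≤ n → x ∈ bag i → x ∈ bag k → x ∈ bag j

lemma rpwLE_rpw {V' : Type u} [Finite V'] (G : SimpleGraph V') (x : V') :
    rpwLE G x (rpw G x) := by
  haveI := Fintype.ofFinite V'
  haveI : Nonempty V' := ⟨x⟩
  have hne : {r | rpwLE G x r}.Nonempty := by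
    refine ⟨Fintype.card V' - 1,
      ⟨⟨0, fun _ => Finset.univ, fun u w _ => ⟨0, by simp⟩, fun y => ⟨0, by simp⟩,
        fun _ _ _ _ _ _ _ _ => Finset.mem_univ _⟩, by simp, fun i => ?_⟩⟩
    have := Fintype.card_pos (α := V')
    simp only [Finset.card_univ]
    omega
  exact Nat.sInf_mem hne

lemma PPD.ofRooted [DecidableEq V] {T : SimpleGraph V} {S : Set V} {x : ↥S} {r : ℕ}
    (h : rpwLE (T.induce S) x r) :
    ∃ P : PPD T S, (∀ i, i ≤ P.n → (P.bag i).card ≤ r + 1) ∧ (x : V) ∈ P.bag P.n := by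
  obtain ⟨D, hx, hw⟩ := h
  refine ⟨⟨D.n, fun i => if h : i ≤ D.n then (D.bag ⟨i, by omega⟩).image Subtype.val else ∅,
      ?_, ?_, ?_, ?_⟩, ?_, ?_⟩
  · intro i hi y hy
    simp only [dif_pos hi] at hy
    obtain ⟨a, _, rfl⟩ := Finset.mem_image.mp hy
    exact a.2
  · intro y hy
    obtain ⟨i, hi⟩ := D.cov_vert ⟨y, hy⟩
    exact ⟨i.val, by omega, by simp only [dif_pos (Nat.lt_succ_iff.mp i.isLt)]; exact Finset.mem_image.mpr ⟨⟨y, hy⟩, by simpa using hi, rfl⟩⟩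
  · intro a b ha hb hab
    obtain ⟨i, h1, h2⟩ := D.cov_edge (u := ⟨a, ha⟩) (w := ⟨b, hb⟩) hab
    exact ⟨i.val, by omega, by simp only [dif_pos (Nat.lt_succ_iff.mp i.isLt)]; exact Finset.mem_image.mpr ⟨_, h1, rfl⟩,
      by simp only [dif_pos (Nat.lt_succ_iff.mp i.isLt)]; exact Finset.mem_image.mpr ⟨_, h2, rfl⟩⟩
  · intro y i j k hij hjk hk hi hk'
    simp only [dif_pos (show i ≤ D.n by omega), dif_pos (show j ≤ D.n by omega), dif_pos (show k ≤ D.n by omega)] at hi hk' ⊢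
    obtain ⟨a, ha, rfl⟩ := Finset.mem_image.mp hi
    obtain ⟨b, hb, hba⟩ := Finset.mem_image.mp hk'
    have : b = a := Subtype.ext hba
    subst this
    exact Finset.mem_image.mpr ⟨b, D.interval b ⟨i, by omega⟩ ⟨j, by omega⟩ ⟨k, by omega⟩
      (Fin.mk_le_mk.mpr hij) (Fin.mk_le_mk.mpr hjk) ha hb, rfl⟩
  · intro i hi
    simp only [dif_pos hi]
    exact le_trans (Finset.card_image_le) (hw _)
  · simp only [dif_pos (le_refl _)]
    exact Finset.mem_image.mpr ⟨x, by simpa [Fin.last] using hx, rfl⟩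

lemma PPD.addRoot [DecidableEq V] {T : SimpleGraph V} {S : Set V} (P : PPD T S) (v : V)
    (hv : v ∉ S) :
    ∃ Q : PPD T (insert v S), Q.n = P.n ∧ ∀ i, Q.bag i = insert v (P.bag i) := by
  refine ⟨⟨P.n, fun i => insert v (P.bag i), ?_, ?_, ?_, ?_⟩, rfl, fun _ => rfl⟩
  · intro i hi x hx
    rcases Finset.mem_insert.mp hx with rfl | hx
    · exact Set.mem_insert _ _
    · exact Set.mem_insert_of_mem _ (P.sub i hi x hx)
  · intro x hx
    rcases Set.mem_insert_iff.mp hx with rfl | hx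
    · exact ⟨0, by omega, Finset.mem_insert_self _ _⟩
    · obtain ⟨i, hi, h⟩ := P.cov_vert x hx
      exact ⟨i, hi, Finset.mem_insert_of_mem h⟩
  · intro a b ha hb hab
    by_cases hav : a = v
    · have hbS : b ∈ S := by
        rcases Set.mem_insert_iff.mp hb with h | h
        · exact absurd (hav.trans h.symm) hab.ne
        · exact h
      obtain ⟨i, hi, h⟩ := P.cov_vert b hbS
      exact ⟨i, hi, by rw [hav]; exact Finset.mem_insert_self _ _, Finset.mem_insert_of_mem h⟩
    · by_cases hbv : b = v
      · have haS : a ∈ S := (Set.mem_insert_iff.mp ha).resolve_left hav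
        obtain ⟨i, hi, h⟩ := P.cov_vert a haS
        exact ⟨i, hi, Finset.mem_insert_of_mem h, by rw [hbv]; exact Finset.mem_insert_self _ _⟩
      · obtain ⟨i, hi, h1, h2⟩ := P.cov_edge ((Set.mem_insert_iff.mp ha).resolve_left hav)
          ((Set.mem_insert_iff.mp hb).resolve_left hbv) hab
        exact ⟨i, hi, Finset.mem_insert_of_mem h1, Finset.mem_insert_of_mem h2⟩
  · intro x i j k hij hjk hk hi hk'
    rcases Finset.mem_insert.mp hi with rfl | hi
    · exact Finset.mem_insert_self _ _
    · rcases Finset.mem_insert.mp hk' with h | hk'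
      · exact absurd (P.sub i (by omega) x hi) (h ▸ hv)
      · exact Finset.mem_insert_of_mem (P.interval x i j k hij hjk hk hi hk')

end Helpers

section Helpers2
variable {V : Type u}

lemma PPD.append {T : SimpleGraph V} {S₁ S₂ : Set V} (P : PPD T S₁) (Q : PPD T S₂)
    (M : Finset V)
    (hdisj : ∀ x, x ∈ S₁ → x ∉ S₂)
    (hM : ∀ x ∈ M, x ∈ S₁ ∨ x ∈ S₂)
    (hM1 : ∀ x ∈ M, x ∈ S₁ → x ∈ P.bag P.n)
    (hM2 : ∀ x ∈ M, x ∈ S₂ → x ∈ Q.bag 0)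
    (hcross : ∀ ⦃x y⦄, x ∈ S₁ → y ∈ S₂ → T.Adj x y → x ∈ M ∧ y ∈ M) :
    ∃ R : PPD T (S₁ ∪ S₂), R.n = P.n + Q.n + 2 ∧
      (∀ i, i ≤ P.n → R.bag i = P.bag i) ∧
      R.bag (P.n + 1) = M ∧
      (∀ i, R.bag (P.n + 2 + i) = Q.bag i) := by
  set f : ℕ → Finset V := fun i =>
    if i ≤ P.n then P.bag i else if i = P.n + 1 then M else Q.bag (i - (P.n + 2)) with hf
  have e1 : ∀ i, i ≤ P.n → f i = P.bag i := fun i hi => by simp [hf, hi]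
  have e2 : f (P.n + 1) = M := by simp [hf]
  have e3 : ∀ i, f (P.n + 2 + i) = Q.bag i := fun i => by
    simp only [hf]
    rw [if_neg (by omega), if_neg (by omega)]
    congr 1
    omega
  have e3' : ∀ i, P.n + 2 ≤ i → f i = Q.bag (i - (P.n + 2)) := fun i hi => by
    have := e3 (i - (P.n + 2)); rwa [show P.n + 2 + (i - (P.n + 2)) = i by omega] at this
  refine ⟨⟨P.n + Q.n + 2, f, ?_, ?_, ?_, ?_⟩, rfl, e1, e2, e3⟩
  · intro i hi x hx
    rcases Nat.lt_or_ge i (P.n + 1) with h | h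
    · rw [e1 i (by omega)] at hx
      exact Or.inl (P.sub i (by omega) x hx)
    · rcases Nat.lt_or_ge i (P.n + 2) with h' | h'
      · rw [show i = P.n + 1 by omega, e2] at hx
        exact hM x hx
      · rw [e3' i h'] at hx
        exact Or.inr (Q.sub _ (by omega) x hx)
  · intro x hx
    rcases hx with hx | hx
    · obtain ⟨i, hi, h⟩ := P.cov_vert x hx
      exact ⟨i, by omega, by rwa [e1 i hi]⟩
    · obtain ⟨i, hi, h⟩ := Q.cov_vert x hx
      exact ⟨P.n + 2 + i, by omega, by rwa [e3 i]⟩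
  · intro a b ha hb hab
    rcases ha with ha | ha
    · rcases hb with hb | hb
      · obtain ⟨i, hi, h1, h2⟩ := P.cov_edge ha hb hab
        exact ⟨i, by omega, by rwa [e1 i hi], by rwa [e1 i hi]⟩
      · obtain ⟨h1, h2⟩ := hcross ha hb hab
        exact ⟨P.n + 1, by omega, by rwa [e2], by rwa [e2]⟩
    · rcases hb with hb | hb
      · obtain ⟨h1, h2⟩ := hcross hb ha hab.symm
        exact ⟨P.n + 1, by omega, by rwa [e2], by rwa [e2]⟩
      · obtain ⟨i, hi, h1, h2⟩ := Q.cov_edge ha hb hab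
        exact ⟨P.n + 2 + i, by omega, by rwa [e3 i], by rwa [e3 i]⟩
  · intro x i j k hij hjk hk hi hk'
    have zone1 : ∀ m, m ≤ P.n → x ∈ f m → x ∈ S₁ := fun m hm h => P.sub m hm x (by rwa [e1 m hm] at h)
    have zone3 : ∀ m, P.n + 2 ≤ m → m ≤ P.n + Q.n + 2 → x ∈ f m → x ∈ S₂ := fun m hm hm' h =>
      Q.sub (m - (P.n + 2)) (by omega) x (by rwa [e3' m hm] at h)
    rcases Nat.lt_or_ge i (P.n + 1) with hi1 | hi1
    · -- i in zone 1
      rcases Nat.lt_or_ge k (P.n + 1) with hk1 | hk1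
      · rw [e1 j (by omega)]
        exact P.interval x i j k hij hjk (by omega) (by rwa [e1 i (by omega)] at hi)
          (by rwa [e1 k (by omega)] at hk')
      · rcases Nat.lt_or_ge k (P.n + 2) with hk2 | hk2
        · -- k = P.n + 1, x ∈ M and x ∈ S₁
          have hxM : x ∈ M := by rwa [show k = P.n + 1 by omega, e2] at hk'
          have hxP : x ∈ P.bag P.n := hM1 x hxM (zone1 i (by omega) hi)
          rcases Nat.lt_or_ge j (P.n + 1) with hj1 | hj1
          · rw [e1 j (by omega)]
            exact P.interval x i j P.n hij (by omega) (le_refl _)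
              (by rwa [e1 i (by omega)] at hi) hxP
          · rw [show j = P.n + 1 by omega, e2]; exact hxM
        · -- k in zone 3: contradiction
          exact absurd (zone3 k hk2 hk hk') (hdisj x (zone1 i (by omega) hi))
    · rcases Nat.lt_or_ge i (P.n + 2) with hi2 | hi2
      · -- i = P.n + 1, x ∈ M
        have hxM : x ∈ M := by rwa [show i = P.n + 1 by omega, e2] at hi
        rcases Nat.lt_or_ge j (P.n + 2) with hj2 | hj2
        · rw [show j = P.n + 1 by omega, e2]; exact hxM
        · -- j in zone 3, hence k in zone 3
          have hxS₂ : x ∈ S₂ := zone3 k (by omega) hk hk'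
          have hx0 : x ∈ Q.bag 0 := hM2 x hxM hxS₂
          rw [e3' j hj2]
          exact Q.interval x 0 (j - (P.n + 2)) (k - (P.n + 2)) (by omega) (by omega) (by omega)
            hx0 (by rwa [e3' k (by omega)] at hk')
      · -- i in zone 3
        rw [e3' j (by omega)]
        exact Q.interval x (i - (P.n + 2)) (j - (P.n + 2)) (k - (P.n + 2)) (by omega) (by omega)
          (by omega) (by rwa [e3' i hi2] at hi) (by rwa [e3' k (by omega)] at hk')

end Helpers2

section Helpers3
variable {V : Type u}

lemma reach_of_walk {T : SimpleGraph V} {v a b : V} (q : T.Walk a b)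
    (h : ∀ z ∈ q.support, z ≠ v) :
    (T.induce {y : V | y ≠ v}).Reachable ⟨a, h a q.start_mem_support⟩
      ⟨b, h b q.end_mem_support⟩ := by
  induction q with
  | nil => exact Reachable.refl _
  | @cons a c b' hadj p ih =>
      have h' : ∀ z ∈ p.support, z ≠ v := fun z hz =>
        h z (by rw [SimpleGraph.Walk.support_cons]; exact List.mem_cons_of_mem _ hz)
      have ha : a ≠ v := h a ((SimpleGraph.Walk.cons hadj p).start_mem_support)
      have hc : c ≠ v := h' c p.start_mem_support
      exact Reachable.trans
        (SimpleGraph.Adj.reachable (u := (⟨a, ha⟩ : {y : V // y ≠ v}))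
          (v := ⟨c, hc⟩) (by exact hadj)) (ih h')

end Helpers3
/-- Let `T` be a tree, `v` a vertex with neighbours `w 0, …,
w (d-1)`, and let `r m` be the rooted pathwidth of the component of `T - v`
containing `w m`, rooted at `w m`, the enumeration being chosen so the values `r m`
are sorted in decreasing order. Then `rpw(T, v) ≤ max {r 0, r 1 + 1}`. -/

theorem stmt10 {V : Type} [Fintype V] (T : SimpleGraph V)
    (htree : T.Connected ∧ T.IsAcyclic) (v : V) (d : ℕ) (hd : 1 < d)
    (w : Fin d → V) (hinj : Function.Injective w)
    (hnbr : ∀ u, T.Adj v u ↔ ∃ m, w m = u)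
    (r : Fin d → ℕ) (hsorted : Antitone r)
    (hr : ∀ m : Fin d, r m = rpw (T.induce (CompOf T v (w m)))
      ⟨w m, by
        have hadj : T.Adj v (w m) := (hnbr (w m)).mpr ⟨m, rfl⟩
        exact ⟨hadj.ne', hadj.ne', Reachable.refl _⟩⟩) :
    rpw T v ≤ max (r ⟨0, by omega⟩) (r ⟨1, hd⟩ + 1) := by
  classical
  set z : Fin d := ⟨0, by omega⟩ with hz
  set o : Fin d := ⟨1, hd⟩ with ho
  set C : Fin d → Set V := fun m => CompOf T v (w m) with hC
  have hvm : ∀ m, T.Adj v (w m) := fun m => (hnbr (w m)).mpr ⟨m, rfl⟩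
  have hwv : ∀ m : Fin d, w m ≠ v := fun m => (hvm m).ne'
  have hwC : ∀ m, w m ∈ C m := fun m => ⟨hwv m, hwv m, Reachable.refl _⟩
  have hCv : ∀ (m : Fin d) x, x ∈ C m → x ≠ v := by
    rintro m x ⟨h1, -, -⟩; exact h1
  have hCadj : ∀ (m : Fin d) x y, x ∈ C m → T.Adj x y → y ≠ v → y ∈ C m := by
    rintro m x y ⟨hx, hu, hrm⟩ hadj hy
    exact ⟨hy, hu, hrm.trans (SimpleGraph.Adj.reachable
      (u := (⟨x, hx⟩ : {s : V // s ≠ v})) (v := ⟨y, hy⟩) (by exact hadj))⟩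
  have hCdisj : ∀ m m' : Fin d, m ≠ m' → ∀ x, x ∈ C m → x ∉ C m' := by
    rintro m m' hmm x ⟨hx, hu, hrm⟩ ⟨hx', hu', hrm'⟩
    have hr2 : (T.induce {y : V | y ≠ v}).Reachable ⟨w m, hu⟩ ⟨w m', hu'⟩ :=
      hrm.trans hrm'.symm
    obtain ⟨p0⟩ := hr2
    let hom : T.induce {y : V | y ≠ v} →g T := ⟨Subtype.val, fun h => h⟩
    set q : T.Walk (w m) (w m') := Walk.map hom p0.toPath.val with hqdef
    have hq : q.IsPath := Walk.map_isPath_of_injective Subtype.val_injective p0.toPath.2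
    have hqs : ∀ s ∈ q.support, s ≠ v := by
      intro s hs
      rw [hqdef, Walk.support_map] at hs
      obtain ⟨a, -, rfl⟩ := List.mem_map.mp hs
      exact a.2
    have hp1 : (Walk.cons (hvm m) q).IsPath := hq.cons (fun hc => hqs v hc rfl)
    have hp2 : (Walk.cons (hvm m') Walk.nil).IsPath := by
      simp [Walk.isPath_def, (hvm m').ne]
    have heq := isAcyclic_iff_path_unique.mp htree.2
      ⟨Walk.cons (hvm m) q, hp1⟩ ⟨Walk.cons (hvm m') Walk.nil, hp2⟩
    have hsup : (Walk.cons (hvm m) q).support = (Walk.cons (hvm m') Walk.nil).support :=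
      congrArg (fun p : T.Path v (w m') => p.1.support) heq
    have hin : w m ∈ (Walk.cons (hvm m') Walk.nil).support := by
      rw [← hsup, Walk.support_cons]
      exact List.mem_cons_of_mem _ q.start_mem_support
    simp only [Walk.support_cons, Walk.support_nil, List.mem_cons, List.mem_singleton,
      List.not_mem_nil, or_false] at hin
    rcases hin with h | h
    · exact hwv m h
    · exact hmm (hinj h)
  have hcover : ∀ x : V, x ≠ v → ∃ m, x ∈ C m := by
    intro x hxv
    obtain ⟨q0⟩ := htree.1.preconnected v x
    obtain ⟨pw, hpw⟩ := q0.toPath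
    cases pw with
    | nil => exact absurd rfl hxv.symm
    | cons hadj q =>
      rename_i y
      obtain ⟨m, rfl⟩ := (hnbr y).mp hadj
      have hvq : v ∉ q.support := by
        have h2 := hpw.support_nodup
        rw [Walk.support_cons] at h2
        exact (List.nodup_cons.mp h2).1
      exact ⟨m, hxv, (hvm m).ne', reach_of_walk q (fun s hs hsv => hvq (by rwa [hsv] at hs))⟩
  -- rooted partial decompositions of the components
  have hP : ∀ m : Fin d, ∃ P : PPD T (C m),
      (∀ i, i ≤ P.n → (P.bag i).card ≤ r m + 1) ∧ w m ∈ P.bag P.n := by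
    intro m
    have hx : rpwLE (T.induce (C m)) ⟨w m, hwC m⟩ (r m) := by
      rw [hr m]; exact rpwLE_rpw _ _
    exact PPD.ofRooted hx
  -- the union of the components 1..k
  set U : ℕ → Set V := fun k => {x | ∃ m : Fin d, 1 ≤ (m : ℕ) ∧ (m : ℕ) ≤ k ∧ x ∈ C m} with hU0
  have hU : ∀ k, 1 ≤ k → k < d →
      ∃ Q : PPD T (U k), ∀ i, i ≤ Q.n → (Q.bag i).card ≤ r o + 1 := by
    intro k
    induction k with
    | zero => omega
    | succ k ih =>
      intro _ hkd
      by_cases hk0 : k = 0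
      · subst hk0
        obtain ⟨P, hPw, -⟩ := hP o
        have hset : U (0 + 1) = C o := by
          ext x
          constructor
          · rintro ⟨m, h1, h2, hx⟩
            have : m = o := Fin.ext (by simp [ho]; omega)
            rwa [← this]
          · intro hx
            exact ⟨o, by simp [ho], by simp [ho], hx⟩
        rw [hset]
        exact ⟨P, hPw⟩
      · obtain ⟨Qk, hQw⟩ := ih (by omega) (by omega)
        have hlt : k + 1 < d := hkd
        obtain ⟨P, hPw, -⟩ := hP ⟨k + 1, hlt⟩
        have hne : ∀ m : Fin d, (m : ℕ) ≤ k → m ≠ ⟨k + 1, hlt⟩ := by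
          intro m hm h
          rw [Fin.ext_iff] at h
          simp at h
          omega
        have hd12 : ∀ x, x ∈ U k → x ∉ C ⟨k + 1, hlt⟩ := by
          rintro x ⟨m, h1, h2, hx⟩ hx'
          exact hCdisj m ⟨k + 1, hlt⟩ (hne m h2) x hx hx'
        have hcross : ∀ ⦃x y : V⦄, x ∈ U k → y ∈ C ⟨k + 1, hlt⟩ → T.Adj x y →
            x ∈ P.bag 0 ∧ y ∈ P.bag 0 := by
          rintro x y ⟨m, h1, h2, hx⟩ hy hadj
          exact absurd (hCadj m x y hx hadj (hCv _ y hy)) (fun h =>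
            hCdisj m ⟨k + 1, hlt⟩ (hne m h2) y h hy)
        obtain ⟨R, hRn, hR1, hRM, hR3⟩ := PPD.append Qk P (P.bag 0) hd12
          (fun x hx => Or.inr (P.sub 0 (Nat.zero_le _) x hx))
          (fun x hx hx1 => absurd (P.sub 0 (Nat.zero_le _) x hx) (hd12 x hx1))
          (fun x hx _ => hx) hcross
        have hset : U (k + 1) = U k ∪ C ⟨k + 1, hlt⟩ := by
          ext x
          constructor
          · rintro ⟨m, h1, h2, hx⟩
            rcases Nat.lt_or_ge (m : ℕ) (k + 1) with h | h
            · exact Or.inl ⟨m, h1, by omega, hx⟩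
            · have : m = ⟨k + 1, hlt⟩ := Fin.ext (by simp; omega)
              exact Or.inr (this ▸ hx)
          · rintro (⟨m, h1, h2, hx⟩ | hx)
            · exact ⟨m, h1, by omega, hx⟩
            · exact ⟨⟨k + 1, hlt⟩, by simp, by simp, hx⟩
        rw [hset]
        have hro : r ⟨k + 1, hlt⟩ ≤ r o := hsorted (by rw [ho, Fin.mk_le_mk]; omega)
        refine ⟨R, fun i hi => ?_⟩
        rcases Nat.lt_or_ge i (Qk.n + 1) with h1 | h1
        · rw [hR1 i (by omega)]
          exact hQw i (by omega)
        · rcases Nat.lt_or_ge i (Qk.n + 2) with h2 | h2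
          · rw [show i = Qk.n + 1 by omega, hRM]
            exact le_trans (hPw 0 (Nat.zero_le _)) (by omega)
          · have h3 := hR3 (i - (Qk.n + 2))
            rw [show Qk.n + 2 + (i - (Qk.n + 2)) = i by omega] at h3
            rw [h3]
            refine le_trans (hPw _ ?_) (by omega)
            rw [hRn] at hi
            omega
  -- final assembly
  obtain ⟨Q, hQw⟩ := hU (d - 1) (by omega) (by omega)
  have hvU : v ∉ U (d - 1) := by rintro ⟨m, -, -, hx⟩; exact hCv m v hx rfl
  obtain ⟨Q', hQ'n, hQ'bag⟩ := PPD.addRoot Q v hvU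
  obtain ⟨P0, hP0w, hP0root⟩ := hP z
  have hwzU : w z ∉ U (d - 1) := by
    rintro ⟨m, h1, -, hx⟩
    exact hCdisj z m (fun h => by rw [hz, Fin.ext_iff] at h; simp at h; omega) (w z) (hwC z) hx
  have hdisj : ∀ x, x ∈ C z → x ∉ insert v (U (d - 1)) := by
    rintro x hx (rfl | hx')
    · exact hCv z x hx rfl
    · obtain ⟨m, h1, -, hxm⟩ := hx'
      exact hCdisj z m (fun h => by rw [hz, Fin.ext_iff] at h; simp at h; omega) x hx hxm
  have hcross : ∀ ⦃x y : V⦄, x ∈ C z → y ∈ insert v (U (d - 1)) → T.Adj x y →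
      x ∈ ({w z, v} : Finset V) ∧ y ∈ ({w z, v} : Finset V) := by
    rintro x y hx (rfl | hy') hadj
    · obtain ⟨m, hm⟩ := (hnbr x).mp hadj.symm
      have : m = z := by
        by_contra h
        exact hCdisj m z h x (hm ▸ hwC m) hx
      rw [this] at hm
      exact ⟨by simp [← hm], by simp⟩
    · obtain ⟨m, h1, -, hym⟩ := hy'
      exact absurd (hCadj z x y hx hadj (hCv m y hym)) (fun h =>
        hCdisj z m (fun h' => by rw [hz, Fin.ext_iff] at h'; simp at h'; omega) y h hym)
  obtain ⟨R, hRn, hR1, hRM, hR3⟩ := PPD.append P0 Q' ({w z, v} : Finset V) hdisj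
    (fun x hx => by
      rcases Finset.mem_insert.mp hx with rfl | hx'
      · exact Or.inl (hwC z)
      · rw [Finset.mem_singleton.mp hx']
        exact Or.inr (Set.mem_insert _ _))
    (fun x hx hx1 => by
      rcases Finset.mem_insert.mp hx with rfl | hx'
      · exact hP0root
      · rw [Finset.mem_singleton.mp hx'] at hx1
        exact absurd rfl (hCv z v hx1))
    (fun x hx hx2 => by
      rcases Finset.mem_insert.mp hx with rfl | hx'
      · rcases Set.mem_insert_iff.mp hx2 with h | h
        · exact absurd h (hwv z)
        · exact absurd h hwzU
      · rw [Finset.mem_singleton.mp hx', hQ'bag 0]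
        exact Finset.mem_insert_self _ _)
    hcross
  have huniv : ∀ x : V, x ∈ C z ∪ insert v (U (d - 1)) := by
    intro x
    by_cases hxv : x = v
    · exact Or.inr (Set.mem_insert_iff.mpr (Or.inl hxv))
    · obtain ⟨m, hm⟩ := hcover x hxv
      rcases Nat.eq_zero_or_pos (m : ℕ) with h | h
      · have : m = z := Fin.ext (by simpa using h)
        exact Or.inl (this ▸ hm)
      · exact Or.inr (Set.mem_insert_iff.mpr (Or.inr ⟨m, h, by omega, hm⟩))
  -- width bound
  set W := max (r z) (r o + 1) with hW
  have hwidth : ∀ i, i ≤ R.n → (R.bag i).card ≤ W + 1 := by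
    intro i hi
    rcases Nat.lt_or_ge i (P0.n + 1) with h1 | h1
    · rw [hR1 i (by omega)]
      exact le_trans (hP0w i (by omega)) (by have := le_max_left (r z) (r o + 1); omega)
    · rcases Nat.lt_or_ge i (P0.n + 2) with h2 | h2
      · rw [show i = P0.n + 1 by omega, hRM]
        have hcard : ({w z, v} : Finset V).card ≤ 2 :=
          le_trans (Finset.card_insert_le _ _) (by simp)
        have := le_max_right (r z) (r o + 1)
        omega
      · have h3 := hR3 (i - (P0.n + 2))
        rw [show P0.n + 2 + (i - (P0.n + 2)) = i by omega] at h3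
        rw [h3, hQ'bag]
        have h4 : (Q.bag (i - (P0.n + 2))).card ≤ r o + 1 := by
          apply hQw
          rw [hRn, hQ'n] at hi
          omega
        have h5 := Finset.card_insert_le v (Q.bag (i - (P0.n + 2)))
        have := le_max_right (r z) (r o + 1)
        omega
  -- v in the last bag
  have hvlast : v ∈ R.bag R.n := by
    have h3 := hR3 Q'.n
    rw [show P0.n + 2 + Q'.n = R.n by omega] at h3
    rw [h3, hQ'bag]
    exact Finset.mem_insert_self _ _
  -- build the path decomposition
  apply Nat.sInf_le
  show rpwLE T v W
  refine ⟨⟨R.n, fun i => R.bag i.val, ?_, ?_, ?_⟩, ?_, ?_⟩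
  · intro a b hab
    obtain ⟨i, hi, h1, h2⟩ := R.cov_edge (huniv a) (huniv b) hab
    exact ⟨⟨i, by omega⟩, h1, h2⟩
  · intro x
    obtain ⟨i, hi, h1⟩ := R.cov_vert x (huniv x)
    exact ⟨⟨i, by omega⟩, h1⟩
  · intro x i j k hij hjk hi hk
    exact R.interval x i.val j.val k.val hij hjk (by omega) hi hk
  · simpa using hvlast
  · intro i
    exact hwidth i.val (Nat.lt_succ_iff.mp i.isLt)
end Defs
end
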